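/- arXiv:2602.03862 — 5 statements merged into one kernel-verified Lean document; each statement's English description precedes it below -/
import Mathlib

section
/- If G is a finite simple graph in which every edge uv satisfies d(u)+d(v) ≤ 2k+1 for a positive integer k, then every subgraph of G has average degree at most 2k(k+1)/(2k+1); that is, mad(G) ≤ 2k(k+1)/(2k+1). -/
open SimpleGraph

variable {V : Type*}

/-- Two edges are at distance at most 2 (they "see" each other): distinct and
some endpoint of one equals or is adjacent to some endpoint of the other. -/
def EdgeSees (G : SimpleGraph V) (e e' : Sym2 V) : Prop :=
  e ≠ e' ∧ ∃ a ∈ e, ∃ b ∈ e', a = b ∨ G.Adj a b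

/-- `G` admits a strong `N`-edge-coloring. -/
def HasStrongColoring (G : SimpleGraph V) (N : ℕ) : Prop :=
  ∃ f : G.edgeSet → Fin N, ∀ e e' : G.edgeSet, EdgeSees G e.val e'.val → f e ≠ f e'

/-- `G − v`: delete the vertex `v` (remove all edges incident to it). -/
def DelV (G : SimpleGraph V) (v : V) : SimpleGraph V where
  Adj a b := G.Adj a b ∧ a ≠ v ∧ b ≠ v
  symm := ⟨fun _ _ h => ⟨h.1.symm, h.2.2, h.2.1⟩⟩
  loopless := ⟨fun a h => G.loopless.irrefl a h.1⟩

/-- Key arithmetic fact: if `a + b ≤ 2k+1` for positive integers `a, b`, then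
`1/a + 1/b ≥ (2k+1)/(k(k+1))`. -/
lemma key_ineq (k : ℕ) (hk : 1 ≤ k) {a b : ℕ} (ha : 1 ≤ a) (hb : 1 ≤ b)
    (hab : a + b ≤ 2 * k + 1) :
    (2 * k + 1 : ℚ) / (k * (k + 1)) ≤ (a : ℚ)⁻¹ + (b : ℚ)⁻¹ := by
  wlog hle : a ≤ b generalizing a b
  · rw [add_comm ((a : ℚ))⁻¹]
    exact this hb ha (by omega) (by omega)
  have hak : a ≤ k := by omega
  have hkQ : (1 : ℚ) ≤ k := by exact_mod_cast hk
  have hx1 : (1 : ℚ) ≤ (a : ℚ) := by exact_mod_cast ha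
  have hy1 : (1 : ℚ) ≤ (b : ℚ) := by exact_mod_cast hb
  have hxk : (a : ℚ) ≤ k := by exact_mod_cast hak
  have hxy : (a : ℚ) ≤ b := by exact_mod_cast hle
  have hsum : (a : ℚ) + b ≤ 2 * k + 1 := by exact_mod_cast hab
  have hxpos : (0 : ℚ) < a := by linarith
  have hypos : (0 : ℚ) < b := by linarith
  rw [inv_eq_one_div, inv_eq_one_div, div_add_div _ _ (ne_of_gt hxpos) (ne_of_gt hypos),
    div_le_div_iff₀ (by positivity) (by positivity)]
  have hu : (0 : ℚ) ≤ (k : ℚ) - a := by linarith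
  have hu1 : (0 : ℚ) ≤ (k : ℚ) + 1 - a := by linarith
  have hs : (0 : ℚ) ≤ 2 * (k : ℚ) + 1 - a - b := by linarith
  have ht : (0 : ℚ) ≤ (b : ℚ) - a := by linarith
  by_cases hcase : (2 * (k : ℚ) + 1) * ((k : ℚ) - a) ≤ (k : ℚ) ^ 2
  · nlinarith [mul_nonneg hs (by linarith : (0:ℚ) ≤ (k:ℚ)^2 - (2*(k:ℚ)+1)*((k:ℚ)-a)),
      mul_nonneg hu hu1]
  · push_neg at hcase
    nlinarith [mul_nonneg ht (by linarith : (0:ℚ) ≤ (2*(k:ℚ)+1)*((k:ℚ)-a) - (k:ℚ)^2),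
      mul_nonneg hu hu1,
      mul_nonneg (mul_nonneg (by linarith : (0:ℚ) ≤ (k:ℚ)) hu) (by linarith : (0:ℚ) ≤ (a:ℚ) - 1),
      mul_nonneg hu (by linarith : (0:ℚ) ≤ (a:ℚ))]

/-- If every edge uv satisfies d(u)+d(v) ≤ 2k+1 (k ≥ 1), then every nonempty
subgraph has average degree at most 2k(k+1)/(2k+1), i.e. mad(G) ≤ 2k(k+1)/(2k+1). -/
theorem stmt0 [Fintype V] (G : SimpleGraph V) [DecidableRel G.Adj] (k : ℕ) (hk : 1 ≤ k)
    (hore : ∀ u v, G.Adj u v → G.degree u + G.degree v ≤ 2 * k + 1) :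
    ∀ G' : G.Subgraph, G'.verts.Nonempty →
      (2 * G'.edgeSet.ncard : ℚ) ≤ (2 * k * (k + 1) : ℚ) / (2 * k + 1) * G'.verts.ncard := by
  classical
  intro G' _hne
  set H : SimpleGraph V := G'.spanningCoe with hHdef
  have hHle : H ≤ G := G'.spanningCoe_le
  have hdeg : ∀ v, H.degree v ≤ G.degree v := by
    intro v
    apply Finset.card_le_card
    intro w hw
    rw [SimpleGraph.mem_neighborFinset] at hw ⊢
    exact hHle hw
  set c : ℚ := (2 * k + 1) / (k * (k + 1)) with hc
  set S : ℚ := ∑ d : H.Dart, ((H.degree d.fst : ℚ))⁻¹ with hS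
  -- lower bound : card darts * c ≤ 2 * S
  have hswap : S = ∑ d : H.Dart, ((H.degree d.snd : ℚ))⁻¹ :=
    Fintype.sum_bijective _ (Dart.symm_involutive (G := H)).bijective _ _ (fun d => rfl)
  have hperdart : ∀ d : H.Dart,
      c ≤ ((H.degree d.fst : ℚ))⁻¹ + ((H.degree d.snd : ℚ))⁻¹ := by
    intro d
    have hadj : H.Adj d.fst d.snd := d.adj
    have h1 : 1 ≤ H.degree d.fst :=
      (H.degree_pos_iff_exists_adj d.fst).2 ⟨d.snd, hadj⟩
    have h2 : 1 ≤ H.degree d.snd :=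
      (H.degree_pos_iff_exists_adj d.snd).2 ⟨d.fst, hadj.symm⟩
    have h3 : H.degree d.fst + H.degree d.snd ≤ 2 * k + 1 :=
      le_trans (Nat.add_le_add (hdeg _) (hdeg _)) (hore _ _ (hHle hadj))
    exact key_ineq k hk h1 h2 h3
  have hlow : (Fintype.card H.Dart : ℚ) * c ≤ 2 * S := by
    calc (Fintype.card H.Dart : ℚ) * c = ∑ _d : H.Dart, c := by
          rw [Finset.sum_const, Finset.card_univ, nsmul_eq_mul]
      _ ≤ ∑ d : H.Dart, (((H.degree d.fst : ℚ))⁻¹ + ((H.degree d.snd : ℚ))⁻¹) :=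
          Finset.sum_le_sum (fun d _ => hperdart d)
      _ = 2 * S := by rw [Finset.sum_add_distrib, ← hS, ← hswap]; ring
  -- upper bound : S ≤ |verts|
  have hfib : S = ∑ v : V, (H.degree v : ℚ) * ((H.degree v : ℚ))⁻¹ := by
    rw [hS, ← Finset.sum_fiberwise_of_maps_to
      (g := fun d : H.Dart => d.fst) (t := Finset.univ) (fun x _ => Finset.mem_univ _)]
    refine Finset.sum_congr rfl (fun v _ => ?_)
    rw [Finset.sum_congr rfl (fun d hd => by rw [(Finset.mem_filter.1 hd).2]),
      Finset.sum_const, H.dart_fst_fiber_card_eq_degree v, nsmul_eq_mul]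
  have hup : S ≤ (G'.verts.ncard : ℚ) := by
    have hterm : ∀ v : V,
        (H.degree v : ℚ) * ((H.degree v : ℚ))⁻¹ ≤ if v ∈ G'.verts.toFinset then 1 else 0 := by
      intro v
      by_cases h0 : H.degree v = 0
      · rw [h0]
        simp only [Nat.cast_zero, zero_mul]
        split <;> norm_num
      · have hv : v ∈ G'.verts.toFinset := by
          rw [Set.mem_toFinset]
          obtain ⟨w, hw⟩ := (H.degree_pos_iff_exists_adj v).1 (Nat.pos_of_ne_zero h0)
          exact G'.edge_vert hw
        rw [mul_inv_cancel₀ (by exact_mod_cast h0), if_pos hv]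
    calc S ≤ ∑ v : V, (if v ∈ G'.verts.toFinset then (1:ℚ) else 0) := by
          rw [hfib]; exact Finset.sum_le_sum (fun v _ => hterm v)
      _ = (G'.verts.toFinset.card : ℚ) := by
          rw [Finset.sum_ite_mem, Finset.univ_inter, Finset.sum_const, nsmul_eq_mul, mul_one]
      _ = (G'.verts.ncard : ℚ) := by rw [Set.ncard_eq_toFinset_card']
  -- relating edge counts
  have hES : G'.edgeSet.ncard = H.edgeFinset.card := by
    have : G'.edgeSet = H.edgeSet := by
      ext e
      induction e with
      | _ u v =>
        rw [SimpleGraph.Subgraph.mem_edgeSet, SimpleGraph.mem_edgeSet]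
        rfl
    rw [this, Set.ncard_eq_toFinset_card', SimpleGraph.edgeFinset]
  -- combine
  have hcard : (Fintype.card H.Dart : ℚ) = 2 * (G'.edgeSet.ncard : ℚ) := by
    rw [H.dart_card_eq_twice_card_edges, hES]; push_cast; ring
  have hkQ : (0 : ℚ) < k := by exact_mod_cast hk
  have h2k1 : (0 : ℚ) < 2 * (k : ℚ) + 1 := by linarith
  have hmain : 2 * (G'.edgeSet.ncard : ℚ) * c ≤ 2 * (G'.verts.ncard : ℚ) := by
    calc 2 * (G'.edgeSet.ncard : ℚ) * c = (Fintype.card H.Dart : ℚ) * c := by rw [hcard]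
      _ ≤ 2 * S := hlow
      _ ≤ 2 * (G'.verts.ncard : ℚ) := by linarith
  rw [hc] at hmain
  rw [div_mul_eq_mul_div, le_div_iff₀ h2k1]
  have hkk1 : (0 : ℚ) < (k : ℚ) * ((k : ℚ) + 1) := by positivity
  have h2 := mul_le_mul_of_nonneg_right hmain (le_of_lt hkk1)
  rw [mul_assoc, div_mul_cancel₀ _ (ne_of_gt hkk1)] at h2
  nlinarith [h2]
end

section
/- Let G be a finite simple graph, v a vertex of G incident to edges e₁,…,e_k, and f a strong N-edge-coloring of G − v (i.e., of the subgraph obtained by deleting v and its incident edges). For each edge e incident to v, let L_f(e) be the set of colors in {1,…,N} not used by f on any edge of G − v at distance at most 2 from e in G. If, after some reordering, |L_f(e_i)| ≥ i for each i ∈ {1,…,k}, then f extends to a strong N-edge-coloring of G. -/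
open SimpleGraph

variable {V : Type*}

lemma edgeSees_symm (G : SimpleGraph V) {e e' : Sym2 V} (h : EdgeSees G e e') :
    EdgeSees G e' e := by
  obtain ⟨hne, a, ha, b, hb, hab⟩ := h
  exact ⟨hne.symm, b, hb, a, ha, hab.imp Eq.symm G.adj_symm⟩

lemma mem_delv_of_not_mem (G : SimpleGraph V) (v : V) {e : Sym2 V}
    (he : e ∈ G.edgeSet) (hv : v ∉ e) : e ∈ (DelV G v).edgeSet := by
  induction e using Sym2.ind with
  | _ a b =>
    rw [Sym2.mem_iff, not_or] at hv
    exact ⟨he, fun h => hv.1 h.symm, fun h => hv.2 h.symm⟩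

lemma not_mem_of_mem_delv (G : SimpleGraph V) (v : V) {e : Sym2 V}
    (he : e ∈ (DelV G v).edgeSet) : v ∉ e := by
  induction e using Sym2.ind with
  | _ a b =>
    rw [Sym2.mem_iff, not_or]
    exact ⟨fun h => he.2.1 h.symm, fun h => he.2.2 h.symm⟩

lemma exists_injective_choice {N : ℕ} :
    ∀ (k : ℕ) (L : Fin k → Set (Fin N)), (∀ i : Fin k, (i : ℕ) + 1 ≤ (L i).ncard) →
      ∃ c : Fin k → Fin N, (∀ i, c i ∈ L i) ∧ Function.Injective c := by
  intro k
  induction k with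
  | zero => exact fun L _ => ⟨fun i => i.elim0, fun i => i.elim0, fun i => i.elim0⟩
  | succ n ih =>
    intro L hL
    obtain ⟨c, hc, hcinj⟩ := ih (fun i => L i.castSucc)
      (fun i => by simpa using hL i.castSucc)
    have hrange : (Set.range c).ncard ≤ n := by
      rw [← Set.image_univ]
      calc (c '' Set.univ).ncard ≤ (Set.univ : Set (Fin n)).ncard :=
            Set.ncard_image_le (Set.toFinite _)
        _ = n := by simp [Set.ncard_univ]
    have hne : (L (Fin.last n) \ Set.range c).Nonempty := by
      rw [Set.nonempty_iff_ne_empty]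
      intro h
      have hsub : L (Fin.last n) ⊆ Set.range c := Set.diff_eq_empty.mp h
      have h1 : (L (Fin.last n)).ncard ≤ (Set.range c).ncard :=
        Set.ncard_le_ncard hsub (Set.toFinite _)
      have h2 := hL (Fin.last n)
      simp only [Fin.val_last] at h2
      omega
    obtain ⟨x, hx, hxr⟩ := hne
    refine ⟨Fin.snoc c x, ?_, ?_⟩
    · intro i
      refine Fin.lastCases ?_ ?_ i
      · simpa using hx
      · intro j; simpa using hc j
    · intro i j
      refine Fin.lastCases ?_ ?_ i
      · refine Fin.lastCases ?_ ?_ j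
        · intro _; rfl
        · intro j' h
          simp only [Fin.snoc_last, Fin.snoc_castSucc] at h
          exact absurd ⟨j', h.symm⟩ hxr
      · intro i'
        refine Fin.lastCases ?_ ?_ j
        · intro h
          simp only [Fin.snoc_last, Fin.snoc_castSucc] at h
          exact absurd ⟨i', h⟩ hxr
        · intro j' h
          simp only [Fin.snoc_castSucc] at h
          exact congrArg Fin.castSucc (hcinj h)

/-- Extension lemma: if the edges incident to v can be ordered e₁,…,e_k with
|L_f(e_i)| ≥ i, then the strong N-edge-coloring f of G − v extends to G. -/
theorem stmt2 [Fintype V] (G : SimpleGraph V) (v : V) (N k : ℕ)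
    (f : (DelV G v).edgeSet → Fin N)
    (hf : ∀ e e' : (DelV G v).edgeSet, EdgeSees (DelV G v) e.val e'.val → f e ≠ f e')
    (ε : Fin k → G.edgeSet)
    (hinc : ∀ i, v ∈ (ε i).val)
    (hinj : Function.Injective ε)
    (hall : ∀ e : G.edgeSet, v ∈ e.val → ∃ i, ε i = e)
    (hL : ∀ i : Fin k,
      (i : ℕ) + 1 ≤ {c : Fin N | ∀ e' : (DelV G v).edgeSet,
        EdgeSees G (ε i).val e'.val → f e' ≠ c}.ncard) :
    ∃ g : G.edgeSet → Fin N,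
      (∀ e e' : G.edgeSet, EdgeSees G e.val e'.val → g e ≠ g e') ∧
      ∀ (e : Sym2 V) (he : e ∈ (DelV G v).edgeSet) (he' : e ∈ G.edgeSet),
        g ⟨e, he'⟩ = f ⟨e, he⟩ := by
  classical
  obtain ⟨c, hc, hcinj⟩ := exists_injective_choice k
    (fun i => {c : Fin N | ∀ e' : (DelV G v).edgeSet,
      EdgeSees G (ε i).val e'.val → f e' ≠ c}) hL
  set g : G.edgeSet → Fin N := fun e =>
    if h : v ∈ e.val then c (Classical.choose (hall e h))
    else f ⟨e.val, mem_delv_of_not_mem G v e.property h⟩ with hg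
  have gval : ∀ (e : G.edgeSet) (h : v ∈ e.val) (i : Fin k), ε i = e → g e = c i := by
    intro e h i hi
    rw [hg]
    simp only [dif_pos h]
    congr 1
    apply hinj
    rw [Classical.choose_spec (hall e h), hi]
  have gval' : ∀ (e : G.edgeSet) (h : v ∉ e.val),
      g e = f ⟨e.val, mem_delv_of_not_mem G v e.property h⟩ := by
    intro e h
    rw [hg]; simp only [dif_neg h]
  -- key: edge containing v vs edge not containing v
  have key : ∀ (e e' : G.edgeSet) (h : v ∈ e.val) (h' : v ∉ e'.val),
      EdgeSees G e.val e'.val → g e ≠ g e' := by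
    intro e e' h h' hsee
    obtain ⟨i, hi⟩ := hall e h
    rw [gval e h i hi, gval' e' h']
    have := hc i ⟨e'.val, mem_delv_of_not_mem G v e'.property h'⟩ (by rw [hi]; exact hsee)
    exact fun hh => this hh.symm
  refine ⟨g, ?_, ?_⟩
  · intro e e' hsee
    by_cases h : v ∈ e.val <;> by_cases h' : v ∈ e'.val
    · -- both contain v
      obtain ⟨i, hi⟩ := hall e h
      obtain ⟨j, hj⟩ := hall e' h'
      rw [gval e h i hi, gval e' h' j hj]
      intro hcc
      have : i = j := hcinj hcc
      exact hsee.1 (by rw [← hi, ← hj, this])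
    · exact key e e' h h' hsee
    · intro hh
      exact key e' e h' h (edgeSees_symm G hsee) hh.symm
    · -- neither contains v
      rw [gval' e h, gval' e' h']
      apply hf
      obtain ⟨hne, a, ha, b, hb, hab⟩ := hsee
      refine ⟨hne, a, ha, b, hb, hab.imp id fun hadj => ⟨hadj, ?_, ?_⟩⟩
      · exact fun hav => h (hav ▸ ha)
      · exact fun hbv => h' (hbv ▸ hb)
  · intro e he he'
    have hv : v ∉ e := not_mem_of_mem_delv G v he
    rw [gval' ⟨e, he'⟩ hv]
end

section
/- Let H be a vertex-minimal finite simple graph with θ(H) ≤ 7 and χ'_s(H) > 13. Then H contains no triangle. -/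
open SimpleGraph

variable {V : Type*}

namespace StrongAux

lemma sees_symm {G : SimpleGraph V} {e e' : Sym2 V} (h : EdgeSees G e e') : EdgeSees G e' e := by
  obtain ⟨hne, α, hα, β, hβ, h⟩ := h
  exact ⟨hne.symm, β, hβ, α, hα, by rcases h with h | h; exact Or.inl h.symm; exact Or.inr h.symm⟩

lemma sees_mono {G G' : SimpleGraph V} (hle : G ≤ G') {e e' : Sym2 V}
    (h : EdgeSees G e e') : EdgeSees G' e e' := by
  obtain ⟨hne, α, hα, β, hβ, h⟩ := h
  exact ⟨hne, α, hα, β, hβ, by rcases h with h | h; exact Or.inl h; exact Or.inr (hle h)⟩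

lemma delV_le {G : SimpleGraph V} {a : V} : DelV G a ≤ G := fun _ _ h => h.1

lemma delV_adj {G : SimpleGraph V} {a x y : V} :
    (DelV G a).Adj x y ↔ G.Adj x y ∧ x ≠ a ∧ y ≠ a := Iff.rfl

lemma mem_edgeSet_delV {G : SimpleGraph V} {a : V} {e : Sym2 V} :
    e ∈ (DelV G a).edgeSet ↔ e ∈ G.edgeSet ∧ a ∉ e := by
  induction e using Sym2.ind with
  | _ x y =>
    simp only [SimpleGraph.mem_edgeSet, delV_adj, Sym2.mem_iff]
    constructor
    · rintro ⟨h, hx, hy⟩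
      exact ⟨h, by rintro (rfl | rfl) <;> simp_all⟩
    · rintro ⟨h, hh⟩
      exact ⟨h, fun hx => hh (Or.inl hx.symm), fun hy => hh (Or.inr hy.symm)⟩

lemma not_mem_of_mem_delV {G : SimpleGraph V} {a : V} {e : Sym2 V}
    (h : e ∈ (DelV G a).edgeSet) : a ∉ e := (mem_edgeSet_delV.1 h).2

lemma ne_a_of_mem {G : SimpleGraph V} {a α : V} {e : Sym2 V}
    (h : e ∈ (DelV G a).edgeSet) (hα : α ∈ e) : α ≠ a := by
  rintro rfl; exact (mem_edgeSet_delV.1 h).2 hα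

lemma sees_delV_of_sees {G : SimpleGraph V} {a : V} {e e' : Sym2 V}
    (he : e ∈ (DelV G a).edgeSet) (he' : e' ∈ (DelV G a).edgeSet)
    (h : EdgeSees G e e') : EdgeSees (DelV G a) e e' := by
  obtain ⟨hne, α, hα, β, hβ, h⟩ := h
  refine ⟨hne, α, hα, β, hβ, ?_⟩
  rcases h with h | h
  · exact Or.inl h
  · exact Or.inr ⟨h, ne_a_of_mem he hα, ne_a_of_mem he' hβ⟩

instance delVDecidableRel [DecidableEq V] (G : SimpleGraph V) [DecidableRel G.Adj] (a : V) :
    DecidableRel (DelV G a).Adj := fun x y =>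
  inferInstanceAs (Decidable (G.Adj x y ∧ x ≠ a ∧ y ≠ a))

lemma neighborFinset_delV [Fintype V] {G : SimpleGraph V} [DecidableRel G.Adj] [DecidableEq V]
    {a v : V} (hv : v ≠ a) :
    (DelV G a).neighborFinset v = (G.neighborFinset v).erase a := by
  classical
  ext u
  simp only [SimpleGraph.mem_neighborFinset, Finset.mem_erase, delV_adj]
  constructor
  · rintro ⟨h, _, hu⟩; exact ⟨hu, h⟩
  · rintro ⟨hu, h⟩; exact ⟨h, hv, hu⟩

end StrongAux

namespace StrongAux

def ValidOn (G : SimpleGraph V) (F : Sym2 V → Fin 13) : Prop :=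
  ∀ e ∈ G.edgeSet, ∀ e' ∈ G.edgeSet, EdgeSees G e e' → F e ≠ F e'

lemma exists_validOn_of_hasStrong (G : SimpleGraph V) (h : HasStrongColoring G 13) :
    ∃ F : Sym2 V → Fin 13, ValidOn G F := by
  classical
  obtain ⟨f, hf⟩ := h
  refine ⟨fun e => if h : e ∈ G.edgeSet then f ⟨e, h⟩ else 0, ?_⟩
  intro e he e' he' hs
  simpa [he, he'] using hf ⟨e, he⟩ ⟨e', he'⟩ hs

lemma mem_inc {G : SimpleGraph V} [Fintype V] [DecidableEq V] [DecidableRel G.Adj]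
    {v : V} {e : Sym2 V} : e ∈ G.incidenceFinset v ↔ e ∈ G.edgeSet ∧ v ∈ e := by
  rw [SimpleGraph.mem_incidenceFinset]
  exact Iff.rfl

section Deg
variable [Fintype V] [DecidableEq V] (H : SimpleGraph V) [DecidableRel H.Adj] (a : V)

lemma degree_delV_le (v : V) : (DelV H a).degree v ≤ H.degree v := by
  by_cases hv : v = a
  · have h0 : (DelV H a).neighborFinset v = ∅ := by
      ext u; simp [SimpleGraph.mem_neighborFinset, delV_adj, hv]
    show ((DelV H a).neighborFinset v).card ≤ _
    rw [h0]; simp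
  · show ((DelV H a).neighborFinset v).card ≤ (H.neighborFinset v).card
    rw [neighborFinset_delV hv]
    exact Finset.card_le_card (Finset.erase_subset _ _)

lemma degree_delV_lt (v : V) (hav : H.Adj a v) : (DelV H a).degree v + 1 ≤ H.degree v := by
  have hv : v ≠ a := (H.ne_of_adj hav).symm
  show ((DelV H a).neighborFinset v).card + 1 ≤ (H.neighborFinset v).card
  rw [neighborFinset_delV hv]
  have ha : a ∈ H.neighborFinset v := by
    rw [SimpleGraph.mem_neighborFinset]; exact hav.symm
  rw [Finset.card_erase_of_mem ha]
  have : 0 < (H.neighborFinset v).card := Finset.card_pos.2 ⟨a, ha⟩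
  omega

lemma card_inc_le (v : V) : ((DelV H a).incidenceFinset v).card ≤ H.degree v := by
  rw [SimpleGraph.card_incidenceFinset_eq_degree]
  exact degree_delV_le H a v

lemma card_inc_lt (v : V) (hav : H.Adj a v) :
    ((DelV H a).incidenceFinset v).card + 1 ≤ H.degree v := by
  rw [SimpleGraph.card_incidenceFinset_eq_degree]
  exact degree_delV_lt H a v hav

end Deg

end StrongAux

namespace StrongAux

lemma edge_with_a {H : SimpleGraph V} {a : V} {e : Sym2 V} (he : e ∈ H.edgeSet) (ha : a ∈ e) :
    ∃ w, H.Adj a w ∧ e = s(a, w) := by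
  induction e using Sym2.ind with
  | _ u v =>
    rw [Sym2.mem_iff] at ha
    rw [SimpleGraph.mem_edgeSet] at he
    rcases ha with rfl | rfl
    · exact ⟨v, he, rfl⟩
    · exact ⟨u, he.symm, Sym2.eq_swap⟩

lemma extend3 [Fintype V] (H : SimpleGraph V) [DecidableRel H.Adj] (a x p q : V)
    (hax : H.Adj a x) (hap : H.Adj a p) (haq : H.Adj a q)
    (hxp : x ≠ p) (hxq : x ≠ q) (hpq : p ≠ q)
    (hcover : ∀ w, H.Adj a w → w = x ∨ w = p ∨ w = q)
    (F : Sym2 V → Fin 13) (hF : ValidOn (DelV H a) F)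
    (cx cp cq : Fin 13) (h1 : cx ≠ cp) (h2 : cx ≠ cq) (h3 : cp ≠ cq)
    (hcx : ∀ e ∈ (DelV H a).edgeSet, EdgeSees H s(a, x) e → F e ≠ cx)
    (hcp : ∀ e ∈ (DelV H a).edgeSet, EdgeSees H s(a, p) e → F e ≠ cp)
    (hcq : ∀ e ∈ (DelV H a).edgeSet, EdgeSees H s(a, q) e → F e ≠ cq) :
    HasStrongColoring H 13 := by
  classical
  have epx : s(a, p) ≠ s(a, x) := by
    intro h; rw [Sym2.congr_right] at h; exact hxp h.symm
  have eqx : s(a, q) ≠ s(a, x) := by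
    intro h; rw [Sym2.congr_right] at h; exact hxq h.symm
  have eqp : s(a, q) ≠ s(a, p) := by
    intro h; rw [Sym2.congr_right] at h; exact hpq h.symm
  set Ft : Sym2 V → Fin 13 := fun e =>
    if e = s(a, x) then cx else if e = s(a, p) then cp else if e = s(a, q) then cq else F e
    with hFt
  have vx : Ft s(a, x) = cx := by simp [hFt]
  have vp : Ft s(a, p) = cp := by simp [hFt, epx]
  have vq : Ft s(a, q) = cq := by simp [hFt, eqx, eqp]
  have vold : ∀ e : Sym2 V, a ∉ e → Ft e = F e := by
    intro e he
    have n1 : e ≠ s(a, x) := by rintro rfl; exact he (by simp)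
    have n2 : e ≠ s(a, p) := by rintro rfl; exact he (by simp)
    have n3 : e ≠ s(a, q) := by rintro rfl; exact he (by simp)
    simp only [hFt]
    rw [if_neg n1, if_neg n2, if_neg n3]
  have main : ∀ e ∈ H.edgeSet, ∀ e' ∈ H.edgeSet, EdgeSees H e e' → Ft e ≠ Ft e' := by
    intro e he e' he' hs
    by_cases hae : a ∈ e <;> by_cases hae' : a ∈ e'
    · obtain ⟨w, haw, rfl⟩ := edge_with_a he hae
      obtain ⟨w', haw', rfl⟩ := edge_with_a he' hae'
      have hne := hs.1
      rcases hcover w haw with rfl | rfl | rfl <;> rcases hcover w' haw' with rfl | rfl | rfl <;>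
        simp only [vx, vp, vq] <;>
        first
          | exact h1 | exact h2 | exact h3
          | exact h1.symm | exact h2.symm | exact h3.symm
          | exact absurd rfl hne
    · obtain ⟨w, haw, rfl⟩ := edge_with_a he hae
      have he'G : e' ∈ (DelV H a).edgeSet := mem_edgeSet_delV.2 ⟨he', hae'⟩
      rw [vold e' hae']
      rcases hcover w haw with rfl | rfl | rfl
      · rw [vx]; exact (hcx e' he'G hs).symm
      · rw [vp]; exact (hcp e' he'G hs).symm
      · rw [vq]; exact (hcq e' he'G hs).symm
    · obtain ⟨w, haw, rfl⟩ := edge_with_a he' hae'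
      have heG : e ∈ (DelV H a).edgeSet := mem_edgeSet_delV.2 ⟨he, hae⟩
      rw [vold e hae]
      rcases hcover w haw with rfl | rfl | rfl
      · rw [vx]; exact hcx e heG (sees_symm hs)
      · rw [vp]; exact hcp e heG (sees_symm hs)
      · rw [vq]; exact hcq e heG (sees_symm hs)
    · have heG : e ∈ (DelV H a).edgeSet := mem_edgeSet_delV.2 ⟨he, hae⟩
      have he'G : e' ∈ (DelV H a).edgeSet := mem_edgeSet_delV.2 ⟨he', hae'⟩
      rw [vold e hae, vold e' hae']
      exact hF e heG e' he'G (sees_delV_of_sees heG he'G hs)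
  exact ⟨fun e => Ft e.val, fun e e' hs => main e.val e.2 e'.val e'.2 hs⟩

lemma extend2 [Fintype V] (H : SimpleGraph V) [DecidableRel H.Adj] (a p q : V)
    (hap : H.Adj a p) (haq : H.Adj a q) (hpq : p ≠ q)
    (hcover : ∀ w, H.Adj a w → w = p ∨ w = q)
    (F : Sym2 V → Fin 13) (hF : ValidOn (DelV H a) F)
    (cp cq : Fin 13) (h3 : cp ≠ cq)
    (hcp : ∀ e ∈ (DelV H a).edgeSet, EdgeSees H s(a, p) e → F e ≠ cp)
    (hcq : ∀ e ∈ (DelV H a).edgeSet, EdgeSees H s(a, q) e → F e ≠ cq) :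
    HasStrongColoring H 13 := by
  classical
  have eqp : s(a, q) ≠ s(a, p) := by
    intro h; rw [Sym2.congr_right] at h; exact hpq h.symm
  set Ft : Sym2 V → Fin 13 := fun e =>
    if e = s(a, p) then cp else if e = s(a, q) then cq else F e
    with hFt
  have vp : Ft s(a, p) = cp := by simp [hFt]
  have vq : Ft s(a, q) = cq := by simp [hFt, eqp]
  have vold : ∀ e : Sym2 V, a ∉ e → Ft e = F e := by
    intro e he
    have n2 : e ≠ s(a, p) := by rintro rfl; exact he (by simp)
    have n3 : e ≠ s(a, q) := by rintro rfl; exact he (by simp)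
    simp only [hFt]
    rw [if_neg n2, if_neg n3]
  have main : ∀ e ∈ H.edgeSet, ∀ e' ∈ H.edgeSet, EdgeSees H e e' → Ft e ≠ Ft e' := by
    intro e he e' he' hs
    by_cases hae : a ∈ e <;> by_cases hae' : a ∈ e'
    · obtain ⟨w, haw, rfl⟩ := edge_with_a he hae
      obtain ⟨w', haw', rfl⟩ := edge_with_a he' hae'
      have hne := hs.1
      rcases hcover w haw with rfl | rfl <;> rcases hcover w' haw' with rfl | rfl <;>
        simp only [vp, vq] <;>
        first
          | exact h3 | exact h3.symm | exact absurd rfl hne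
    · obtain ⟨w, haw, rfl⟩ := edge_with_a he hae
      have he'G : e' ∈ (DelV H a).edgeSet := mem_edgeSet_delV.2 ⟨he', hae'⟩
      rw [vold e' hae']
      rcases hcover w haw with rfl | rfl
      · rw [vp]; exact (hcp e' he'G hs).symm
      · rw [vq]; exact (hcq e' he'G hs).symm
    · obtain ⟨w, haw, rfl⟩ := edge_with_a he' hae'
      have heG : e ∈ (DelV H a).edgeSet := mem_edgeSet_delV.2 ⟨he, hae⟩
      rw [vold e hae]
      rcases hcover w haw with rfl | rfl
      · rw [vp]; exact hcp e heG (sees_symm hs)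
      · rw [vq]; exact hcq e heG (sees_symm hs)
    · have heG : e ∈ (DelV H a).edgeSet := mem_edgeSet_delV.2 ⟨he, hae⟩
      have he'G : e' ∈ (DelV H a).edgeSet := mem_edgeSet_delV.2 ⟨he', hae'⟩
      rw [vold e hae, vold e' hae']
      exact hF e heG e' he'G (sees_delV_of_sees heG he'G hs)
  exact ⟨fun e => Ft e.val, fun e e' hs => main e.val e.2 e'.val e'.2 hs⟩

end StrongAux

namespace StrongAux

noncomputable def confH [Fintype V] (Hamb G : SimpleGraph V) (E0 : Sym2 V) : Finset (Sym2 V) :=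
  (Set.toFinite {e | e ∈ G.edgeSet ∧ EdgeSees Hamb E0 e}).toFinset

lemma mem_confH [Fintype V] {Hamb G : SimpleGraph V} {E0 e : Sym2 V} :
    e ∈ confH Hamb G E0 ↔ e ∈ G.edgeSet ∧ EdgeSees Hamb E0 e := by
  unfold confH
  exact Set.Finite.mem_toFinset _

section Covers

variable [Fintype V] [DecidableEq V] (H : SimpleGraph V) [DecidableRel H.Adj] (a x p q : V)

lemma mem_edgeSet_delV' {u v : V} (h : H.Adj u v) (hu : u ≠ a) (hv : v ≠ a) :
    s(u, v) ∈ (DelV H a).edgeSet := by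
  rw [SimpleGraph.mem_edgeSet]; exact ⟨h, hu, hv⟩

lemma card_inc_erase (u v : V) (h : H.Adj u v) (hu : u ≠ a) (hv : v ≠ a) :
    (((DelV H a).incidenceFinset v).erase s(u, v)).card + 1 ≤
      ((DelV H a).incidenceFinset v).card := by
  have hm : s(u, v) ∈ (DelV H a).incidenceFinset v :=
    mem_inc.2 ⟨mem_edgeSet_delV' H a h hu hv, by simp⟩
  rw [Finset.card_erase_of_mem hm]
  have : 0 < ((DelV H a).incidenceFinset v).card := Finset.card_pos.2 ⟨_, hm⟩
  omega

lemma conf_cover_x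
    (hax : H.Adj a x) (hap : H.Adj a p) (haq : H.Adj a q) (hApq : H.Adj p q)
    (hcov : ∀ w, H.Adj a w → w = x ∨ w = p ∨ w = q)
    (hdx : H.degree x ≤ 4) (hdpq : H.degree p + H.degree q ≤ 7)
    (hory : ∀ y, H.Adj x y → H.degree x + H.degree y ≤ 7) :
    ((confH H (DelV H a) s(a, x)).erase s(p, q)).card ≤ 12 := by
  classical
  have hpa : p ≠ a := (H.ne_of_adj hap).symm
  have hqa : q ≠ a := (H.ne_of_adj haq).symm
  have hxa : x ≠ a := (H.ne_of_adj hax).symm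
  set A := ((DelV H a).incidenceFinset p).erase s(p, q) with hA
  set B := ((DelV H a).incidenceFinset q).erase s(p, q) with hB
  set C := (DelV H a).incidenceFinset x with hC
  set D := ((H.neighborFinset x).erase a).biUnion
      (fun y => ((DelV H a).incidenceFinset y).erase s(x, y)) with hD
  have hsub : (confH H (DelV H a) s(a, x)).erase s(p, q) ⊆ A ∪ B ∪ C ∪ D := by
    intro e he
    rw [Finset.mem_erase] at he
    obtain ⟨hepq, hec⟩ := he
    rw [mem_confH] at hec
    obtain ⟨heG, hne, α, hα, β, hβ, hor⟩ := hec
    have hβa : β ≠ a := ne_a_of_mem heG hβ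
    simp only [Finset.mem_union]
    rw [Sym2.mem_iff] at hα
    rcases hα with rfl | rfl
    · rcases hor with rfl | hadj
      · exact absurd rfl hβa
      · rcases hcov β hadj with rfl | rfl | rfl
        · exact Or.inl (Or.inr (mem_inc.2 ⟨heG, hβ⟩))
        · exact Or.inl (Or.inl (Or.inl (Finset.mem_erase.2 ⟨hepq, mem_inc.2 ⟨heG, hβ⟩⟩)))
        · exact Or.inl (Or.inl (Or.inr (Finset.mem_erase.2 ⟨hepq, mem_inc.2 ⟨heG, hβ⟩⟩)))
    · rcases hor with rfl | hadj
      · exact Or.inl (Or.inr (mem_inc.2 ⟨heG, hβ⟩))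
      · by_cases hxe : e = s(α, β)
        · exact Or.inl (Or.inr (mem_inc.2 ⟨heG, by rw [hxe]; simp⟩))
        · refine Or.inr (Finset.mem_biUnion.2 ⟨β, Finset.mem_erase.2
            ⟨hβa, (H.mem_neighborFinset α β).2 hadj⟩,
            Finset.mem_erase.2 ⟨hxe, mem_inc.2 ⟨heG, hβ⟩⟩⟩)
  have hcA : A.card + 2 ≤ H.degree p := by
    have h1 := card_inc_erase H a q p hApq.symm hqa hpa
    have h2 := card_inc_lt H a p hap
    rw [hA, Sym2.eq_swap (a := p) (b := q)]
    omega
  have hcB : B.card + 2 ≤ H.degree q := by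
    have h1 := card_inc_erase H a p q hApq hpa hqa
    have h2 := card_inc_lt H a q haq
    rw [hB]
    omega
  have hcC : C.card + 1 ≤ H.degree x := card_inc_lt H a x hax
  have hcD : D.card ≤ (H.degree x - 1) * (6 - H.degree x) := by
    rw [hD]
    refine (Finset.card_biUnion_le).trans ?_
    have hcard : ((H.neighborFinset x).erase a).card = H.degree x - 1 := by
      rw [Finset.card_erase_of_mem ((H.mem_neighborFinset x a).2 hax.symm)]
      rfl
    refine (Finset.sum_le_card_nsmul _ _ (6 - H.degree x) ?_).trans ?_
    · intro y hy
      rw [Finset.mem_erase] at hy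
      obtain ⟨hya, hyN⟩ := hy
      have hxy : H.Adj x y := (H.mem_neighborFinset x y).1 hyN
      have h1 := card_inc_erase H a x y hxy hxa hya
      have h2 := card_inc_le H a y
      have h3 := hory y hxy
      omega
    · rw [hcard, smul_eq_mul]
  have hbig : ∀ n : ℕ, n ≤ 4 → (n - 1) + (n - 1) * (6 - n) ≤ 9 := by
    intro n hn; interval_cases n <;> norm_num
  have h9 := hbig _ hdx
  have htot := Finset.card_le_card hsub
  have hu1 := Finset.card_union_le (A ∪ B ∪ C) D
  have hu2 := Finset.card_union_le (A ∪ B) C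
  have hu3 := Finset.card_union_le A B
  have hprod : D.card ≤ (H.degree x - 1) * (6 - H.degree x) := hcD
  generalize hP : (H.degree x - 1) * (6 - H.degree x) = P at hprod h9
  omega

end Covers
end StrongAux

namespace StrongAux
section Covers2

variable [Fintype V] [DecidableEq V] (H : SimpleGraph V) [DecidableRel H.Adj] (a x p q : V)

lemma conf_cover_mid
    (hax : H.Adj a x) (hap : H.Adj a p) (haq : H.Adj a q) (hApq : H.Adj p q)
    (hcov : ∀ w, H.Adj a w → w = x ∨ w = p ∨ w = q)
    (hory : ∀ y, H.Adj p y → H.degree p + H.degree y ≤ 7) :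
    (confH H (DelV H a) s(a, p)).card ≤
      (H.degree q - 1) + (H.degree x - 1) +
        ((H.degree p - 2) + (H.degree p - 2) * (6 - H.degree p)) := by
  classical
  have hpa : p ≠ a := (H.ne_of_adj hap).symm
  have hqa : q ≠ a := (H.ne_of_adj haq).symm
  have hxa : x ≠ a := (H.ne_of_adj hax).symm
  have hpq : p ≠ q := H.ne_of_adj hApq
  set A := ((DelV H a).incidenceFinset p).erase s(p, q) with hA
  set B := (DelV H a).incidenceFinset q with hB
  set C := (DelV H a).incidenceFinset x with hC
  set D := (((H.neighborFinset p).erase a).erase q).biUnion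
      (fun y => ((DelV H a).incidenceFinset y).erase s(p, y)) with hD
  have hsub : confH H (DelV H a) s(a, p) ⊆ A ∪ B ∪ C ∪ D := by
    intro e he
    rw [mem_confH] at he
    obtain ⟨heG, hne, α, hα, β, hβ, hor⟩ := he
    have hβa : β ≠ a := ne_a_of_mem heG hβ
    simp only [Finset.mem_union]
    rw [Sym2.mem_iff] at hα
    have hcasep : p ∈ e → e ∈ A ∨ e ∈ B := by
      intro hpe
      by_cases hepq : e = s(p, q)
      · exact Or.inr (mem_inc.2 ⟨heG, by rw [hepq]; simp⟩)
      · exact Or.inl (Finset.mem_erase.2 ⟨hepq, mem_inc.2 ⟨heG, hpe⟩⟩)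
    rcases hα with rfl | rfl
    · rcases hor with rfl | hadj
      · exact absurd rfl hβa
      · rcases hcov β hadj with rfl | rfl | rfl
        · exact Or.inl (Or.inr (mem_inc.2 ⟨heG, hβ⟩))
        · rcases hcasep hβ with h | h
          · exact Or.inl (Or.inl (Or.inl h))
          · exact Or.inl (Or.inl (Or.inr h))
        · exact Or.inl (Or.inl (Or.inr (mem_inc.2 ⟨heG, hβ⟩)))
    · rcases hor with rfl | hadj
      · rcases hcasep hβ with h | h
        · exact Or.inl (Or.inl (Or.inl h))
        · exact Or.inl (Or.inl (Or.inr h))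
      · by_cases hβq : β = q
        · subst hβq
          exact Or.inl (Or.inl (Or.inr (mem_inc.2 ⟨heG, hβ⟩)))
        · by_cases hxe : e = s(α, β)
          · have : e ≠ s(α, q) := by
              rw [hxe]; intro h; rw [Sym2.congr_right] at h; exact hβq h
            exact Or.inl (Or.inl (Or.inl (Finset.mem_erase.2
              ⟨this, mem_inc.2 ⟨heG, by rw [hxe]; simp⟩⟩)))
          · refine Or.inr (Finset.mem_biUnion.2 ⟨β, Finset.mem_erase.2
              ⟨hβq, Finset.mem_erase.2 ⟨hβa, (H.mem_neighborFinset α β).2 hadj⟩⟩,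
              Finset.mem_erase.2 ⟨hxe, mem_inc.2 ⟨heG, hβ⟩⟩⟩)
  have hcA : A.card + 2 ≤ H.degree p := by
    have h1 := card_inc_erase H a q p hApq.symm hqa hpa
    have h2 := card_inc_lt H a p hap
    rw [hA, Sym2.eq_swap (a := p) (b := q)]
    omega
  have hcB : B.card + 1 ≤ H.degree q := card_inc_lt H a q haq
  have hcC : C.card + 1 ≤ H.degree x := card_inc_lt H a x hax
  have hcD : D.card ≤ (H.degree p - 2) * (6 - H.degree p) := by
    rw [hD]
    refine (Finset.card_biUnion_le).trans ?_
    have hcard : (((H.neighborFinset p).erase a).erase q).card = H.degree p - 2 := by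
      rw [Finset.card_erase_of_mem, Finset.card_erase_of_mem
        ((H.mem_neighborFinset p a).2 hap.symm)]
      · rfl
      · exact Finset.mem_erase.2 ⟨hqa, (H.mem_neighborFinset p q).2 hApq⟩
    refine (Finset.sum_le_card_nsmul _ _ (6 - H.degree p) ?_).trans ?_
    · intro y hy
      rw [Finset.mem_erase, Finset.mem_erase] at hy
      obtain ⟨hyq, hya, hyN⟩ := hy
      have hpy : H.Adj p y := (H.mem_neighborFinset p y).1 hyN
      have h1 := card_inc_erase H a p y hpy hpa hya
      have h2 := card_inc_le H a y
      have h3 := hory y hpy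
      omega
    · rw [hcard, smul_eq_mul]
  have htot := Finset.card_le_card hsub
  have hu1 := Finset.card_union_le (A ∪ B ∪ C) D
  have hu2 := Finset.card_union_le (A ∪ B) C
  have hu3 := Finset.card_union_le A B
  omega

end Covers2
end StrongAux

namespace StrongAux
section Covers3

variable [Fintype V] [DecidableEq V] (H : SimpleGraph V) [DecidableRel H.Adj] (a p q : V)

lemma conf_cover_mid2
    (hap : H.Adj a p) (haq : H.Adj a q) (hApq : H.Adj p q)
    (hcov : ∀ w, H.Adj a w → w = p ∨ w = q)
    (hory : ∀ y, H.Adj p y → H.degree p + H.degree y ≤ 7) :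
    (confH H (DelV H a) s(a, p)).card ≤
      (H.degree q - 1) +
        ((H.degree p - 2) + (H.degree p - 2) * (6 - H.degree p)) := by
  classical
  have hpa : p ≠ a := (H.ne_of_adj hap).symm
  have hqa : q ≠ a := (H.ne_of_adj haq).symm
  have hpq : p ≠ q := H.ne_of_adj hApq
  set A := ((DelV H a).incidenceFinset p).erase s(p, q) with hA
  set B := (DelV H a).incidenceFinset q with hB
  set D := (((H.neighborFinset p).erase a).erase q).biUnion
      (fun y => ((DelV H a).incidenceFinset y).erase s(p, y)) with hD
  have hsub : confH H (DelV H a) s(a, p) ⊆ A ∪ B ∪ D := by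
    intro e he
    rw [mem_confH] at he
    obtain ⟨heG, hne, α, hα, β, hβ, hor⟩ := he
    have hβa : β ≠ a := ne_a_of_mem heG hβ
    simp only [Finset.mem_union]
    rw [Sym2.mem_iff] at hα
    have hcasep : p ∈ e → e ∈ A ∨ e ∈ B := by
      intro hpe
      by_cases hepq : e = s(p, q)
      · exact Or.inr (mem_inc.2 ⟨heG, by rw [hepq]; simp⟩)
      · exact Or.inl (Finset.mem_erase.2 ⟨hepq, mem_inc.2 ⟨heG, hpe⟩⟩)
    rcases hα with rfl | rfl
    · rcases hor with rfl | hadj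
      · exact absurd rfl hβa
      · rcases hcov β hadj with rfl | rfl
        · rcases hcasep hβ with h | h
          · exact Or.inl (Or.inl h)
          · exact Or.inl (Or.inr h)
        · exact Or.inl (Or.inr (mem_inc.2 ⟨heG, hβ⟩))
    · rcases hor with rfl | hadj
      · rcases hcasep hβ with h | h
        · exact Or.inl (Or.inl h)
        · exact Or.inl (Or.inr h)
      · by_cases hβq : β = q
        · subst hβq
          exact Or.inl (Or.inr (mem_inc.2 ⟨heG, hβ⟩))
        · by_cases hxe : e = s(α, β)
          · have : e ≠ s(α, q) := by
              rw [hxe]; intro h; rw [Sym2.congr_right] at h; exact hβq h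
            exact Or.inl (Or.inl (Finset.mem_erase.2
              ⟨this, mem_inc.2 ⟨heG, by rw [hxe]; simp⟩⟩))
          · refine Or.inr (Finset.mem_biUnion.2 ⟨β, Finset.mem_erase.2
              ⟨hβq, Finset.mem_erase.2 ⟨hβa, (H.mem_neighborFinset α β).2 hadj⟩⟩,
              Finset.mem_erase.2 ⟨hxe, mem_inc.2 ⟨heG, hβ⟩⟩⟩)
  have hcA : A.card + 2 ≤ H.degree p := by
    have h1 := card_inc_erase H a q p hApq.symm hqa hpa
    have h2 := card_inc_lt H a p hap
    rw [hA, Sym2.eq_swap (a := p) (b := q)]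
    omega
  have hcB : B.card + 1 ≤ H.degree q := card_inc_lt H a q haq
  have hcD : D.card ≤ (H.degree p - 2) * (6 - H.degree p) := by
    rw [hD]
    refine (Finset.card_biUnion_le).trans ?_
    have hcard : (((H.neighborFinset p).erase a).erase q).card = H.degree p - 2 := by
      rw [Finset.card_erase_of_mem, Finset.card_erase_of_mem
        ((H.mem_neighborFinset p a).2 hap.symm)]
      · rfl
      · exact Finset.mem_erase.2 ⟨hqa, (H.mem_neighborFinset p q).2 hApq⟩
    refine (Finset.sum_le_card_nsmul _ _ (6 - H.degree p) ?_).trans ?_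
    · intro y hy
      rw [Finset.mem_erase, Finset.mem_erase] at hy
      obtain ⟨hyq, hya, hyN⟩ := hy
      have hpy : H.Adj p y := (H.mem_neighborFinset p y).1 hyN
      have h1 := card_inc_erase H a p y hpy hpa hya
      have h2 := card_inc_le H a y
      have h3 := hory y hpy
      omega
    · rw [hcard, smul_eq_mul]
  have htot := Finset.card_le_card hsub
  have hu1 := Finset.card_union_le (A ∪ B) D
  have hu3 := Finset.card_union_le A B
  omega

lemma conf_cover_pq
    (hap : H.Adj a p) (haq : H.Adj a q) (hApq : H.Adj p q)
    (horp : ∀ y, H.Adj p y → H.degree p + H.degree y ≤ 7)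
    (horq : ∀ y, H.Adj q y → H.degree q + H.degree y ≤ 7) :
    (confH H (DelV H a) s(p, q)).card ≤
      ((H.degree p - 2) + (H.degree p - 2) * (6 - H.degree p)) +
        ((H.degree q - 2) + (H.degree q - 2) * (6 - H.degree q)) := by
  classical
  have hpa : p ≠ a := (H.ne_of_adj hap).symm
  have hqa : q ≠ a := (H.ne_of_adj haq).symm
  have hpq : p ≠ q := H.ne_of_adj hApq
  set A := ((DelV H a).incidenceFinset p).erase s(p, q) with hA
  set B := ((DelV H a).incidenceFinset q).erase s(p, q) with hB
  set Dp := (((H.neighborFinset p).erase a).erase q).biUnion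
      (fun y => ((DelV H a).incidenceFinset y).erase s(p, y)) with hDp
  set Dq := (((H.neighborFinset q).erase a).erase p).biUnion
      (fun y => ((DelV H a).incidenceFinset y).erase s(q, y)) with hDq
  have hsub : confH H (DelV H a) s(p, q) ⊆ A ∪ B ∪ Dp ∪ Dq := by
    intro e he
    rw [mem_confH] at he
    obtain ⟨heG, hne, α, hα, β, hβ, hor⟩ := he
    have hβa : β ≠ a := ne_a_of_mem heG hβ
    have hepq : e ≠ s(p, q) := Ne.symm hne
    simp only [Finset.mem_union]
    rw [Sym2.mem_iff] at hα
    rcases hα with rfl | rfl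
    · rcases hor with rfl | hadj
      · exact Or.inl (Or.inl (Or.inl (Finset.mem_erase.2 ⟨hepq, mem_inc.2 ⟨heG, hβ⟩⟩)))
      · by_cases hβq : β = q
        · subst hβq
          exact Or.inl (Or.inl (Or.inr (Finset.mem_erase.2 ⟨hepq, mem_inc.2 ⟨heG, hβ⟩⟩)))
        · by_cases hxe : e = s(α, β)
          · have hne2 : e ≠ s(α, q) := by
              rw [hxe]; intro h; rw [Sym2.congr_right] at h; exact hβq h
            exact Or.inl (Or.inl (Or.inl (Finset.mem_erase.2
              ⟨hne2, mem_inc.2 ⟨heG, by rw [hxe]; simp⟩⟩)))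
          · exact Or.inl (Or.inr (Finset.mem_biUnion.2 ⟨β, Finset.mem_erase.2
              ⟨hβq, Finset.mem_erase.2 ⟨hβa, (H.mem_neighborFinset α β).2 hadj⟩⟩,
              Finset.mem_erase.2 ⟨hxe, mem_inc.2 ⟨heG, hβ⟩⟩⟩))
    · rcases hor with rfl | hadj
      · exact Or.inl (Or.inl (Or.inr (Finset.mem_erase.2 ⟨hepq, mem_inc.2 ⟨heG, hβ⟩⟩)))
      · by_cases hβp : β = p
        · subst hβp
          exact Or.inl (Or.inl (Or.inl (Finset.mem_erase.2 ⟨hepq, mem_inc.2 ⟨heG, hβ⟩⟩)))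
        · by_cases hxe : e = s(α, β)
          · have hne2 : e ≠ s(p, α) := by
              rw [hxe]; intro h
              rw [Sym2.eq_swap (a := p) (b := α), Sym2.congr_right] at h
              exact hβp h
            exact Or.inl (Or.inl (Or.inr (Finset.mem_erase.2
              ⟨hne2, mem_inc.2 ⟨heG, by rw [hxe]; simp⟩⟩)))
          · exact Or.inr (Finset.mem_biUnion.2 ⟨β, Finset.mem_erase.2
              ⟨hβp, Finset.mem_erase.2 ⟨hβa, (H.mem_neighborFinset α β).2 hadj⟩⟩,
              Finset.mem_erase.2 ⟨hxe, mem_inc.2 ⟨heG, hβ⟩⟩⟩)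
  have hcA : A.card + 2 ≤ H.degree p := by
    have h1 := card_inc_erase H a q p hApq.symm hqa hpa
    have h2 := card_inc_lt H a p hap
    rw [hA, Sym2.eq_swap (a := p) (b := q)]
    omega
  have hcB : B.card + 2 ≤ H.degree q := by
    have h1 := card_inc_erase H a p q hApq hpa hqa
    have h2 := card_inc_lt H a q haq
    rw [hB]
    omega
  have hcDp : Dp.card ≤ (H.degree p - 2) * (6 - H.degree p) := by
    rw [hDp]
    refine (Finset.card_biUnion_le).trans ?_
    have hcard : (((H.neighborFinset p).erase a).erase q).card = H.degree p - 2 := by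
      rw [Finset.card_erase_of_mem, Finset.card_erase_of_mem
        ((H.mem_neighborFinset p a).2 hap.symm)]
      · rfl
      · exact Finset.mem_erase.2 ⟨hqa, (H.mem_neighborFinset p q).2 hApq⟩
    refine (Finset.sum_le_card_nsmul _ _ (6 - H.degree p) ?_).trans ?_
    · intro y hy
      rw [Finset.mem_erase, Finset.mem_erase] at hy
      obtain ⟨hyq, hya, hyN⟩ := hy
      have hpy : H.Adj p y := (H.mem_neighborFinset p y).1 hyN
      have h1 := card_inc_erase H a p y hpy hpa hya
      have h2 := card_inc_le H a y
      have h3 := horp y hpy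
      omega
    · rw [hcard, smul_eq_mul]
  have hcDq : Dq.card ≤ (H.degree q - 2) * (6 - H.degree q) := by
    rw [hDq]
    refine (Finset.card_biUnion_le).trans ?_
    have hcard : (((H.neighborFinset q).erase a).erase p).card = H.degree q - 2 := by
      rw [Finset.card_erase_of_mem, Finset.card_erase_of_mem
        ((H.mem_neighborFinset q a).2 haq.symm)]
      · rfl
      · exact Finset.mem_erase.2 ⟨hpa, (H.mem_neighborFinset q p).2 hApq.symm⟩
    refine (Finset.sum_le_card_nsmul _ _ (6 - H.degree q) ?_).trans ?_
    · intro y hy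
      rw [Finset.mem_erase, Finset.mem_erase] at hy
      obtain ⟨hyp, hya, hyN⟩ := hy
      have hqy : H.Adj q y := (H.mem_neighborFinset q y).1 hyN
      have h1 := card_inc_erase H a q y hqy hqa hya
      have h2 := card_inc_le H a y
      have h3 := horq y hqy
      omega
    · rw [hcard, smul_eq_mul]
  have htot := Finset.card_le_card hsub
  have hu1 := Finset.card_union_le (A ∪ B ∪ Dp) Dq
  have hu2 := Finset.card_union_le (A ∪ B) Dp
  have hu3 := Finset.card_union_le A B
  omega

end Covers3
end StrongAux

namespace StrongAux
section Recolor

variable [Fintype V] [DecidableEq V]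

lemma recolor (G : SimpleGraph V)
    (F : Sym2 V → Fin 13) (hF : ValidOn G F) {pq : Sym2 V} (hpq : pq ∈ G.edgeSet)
    (T : Finset (Sym2 V)) (hpqT : pq ∉ T)
    (hT : T.card ≤ 12)
    (hS : (confH G G pq).card ≤ 10) :
    ∃ F' : Sym2 V → Fin 13, ValidOn G F' ∧ ((insert pq T).image F').card ≤ 12 := by
  classical
  by_cases h : (T.image F).card ≤ 11
  · refine ⟨F, hF, ?_⟩
    rw [Finset.image_insert]
    exact (Finset.card_insert_le _ _).trans (by omega)
  · have hTF : (T.image F).card ≤ 12 := (Finset.card_image_le).trans hT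
    have h12 : (T.image F).card = 12 := by omega
    set Γ : Finset (Fin 13) := (confH G G pq).image F ∪ {F pq} with hΓdef
    have hΓ : Γ.card ≤ 11 := by
      refine (Finset.card_union_le _ _).trans ?_
      have h1 : ((confH G G pq).image F).card ≤ 10 := (Finset.card_image_le).trans hS
      simp only [Finset.card_singleton]
      omega
    have hne : (T.image F \ Γ).Nonempty := by
      rw [← Finset.card_pos]
      have := Finset.le_card_sdiff Γ (T.image F)
      omega
    obtain ⟨γ, hγ⟩ := hne
    rw [Finset.mem_sdiff] at hγ
    obtain ⟨hγT, hγΓ⟩ := hγ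
    refine ⟨Function.update F pq γ, ?_, ?_⟩
    · intro e he e' he' hs
      by_cases hepq : e = pq <;> by_cases he'pq : e' = pq
      · exact absurd (hepq.trans he'pq.symm) hs.1
      · subst hepq
        rw [Function.update_self, Function.update_of_ne he'pq]
        intro hEq
        apply hγΓ
        refine Finset.mem_union_left _ (Finset.mem_image.2 ⟨e', ?_, hEq.symm⟩)
        exact mem_confH.2 ⟨he', hs⟩
      · subst he'pq
        rw [Function.update_of_ne hepq, Function.update_self]
        intro hEq
        apply hγΓ
        refine Finset.mem_union_left _ (Finset.mem_image.2 ⟨e, ?_, hEq⟩)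
        exact mem_confH.2 ⟨he, sees_symm hs⟩
      · rw [Function.update_of_ne hepq, Function.update_of_ne he'pq]
        exact hF e he e' he' hs
    · have himg : T.image (Function.update F pq γ) = T.image F := by
        apply Finset.image_congr
        intro e he
        have hne : e ≠ pq := fun h => hpqT (h ▸ he)
        exact Function.update_of_ne hne _ _
      rw [Finset.image_insert, Function.update_self, himg]
      rw [Finset.insert_eq_self.2 hγT]
      omega

end Recolor
end StrongAux

namespace StrongAux
section Cases

variable [Fintype V] [DecidableEq V] (H : SimpleGraph V) [DecidableRel H.Adj]

lemma exists_color (s : Finset (Fin 13)) (hs : s.card ≤ 12) : ∃ c, c ∉ s := by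
  by_contra h
  push_neg at h
  have hsub : (Finset.univ : Finset (Fin 13)) ⊆ s := fun c _ => h c
  have := Finset.card_le_card hsub
  simp [Finset.card_univ] at this
  omega

lemma case_deg2 (a p q : V)
    (hap : H.Adj a p) (haq : H.Adj a q) (hApq : H.Adj p q)
    (hore : ∀ u w, H.Adj u w → H.degree u + H.degree w ≤ 7)
    (hcov : ∀ w, H.Adj a w → w = p ∨ w = q)
    (hHS : HasStrongColoring (DelV H a) 13) : HasStrongColoring H 13 := by
  classical
  obtain ⟨F, hF⟩ := exists_validOn_of_hasStrong _ hHS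
  have hpq : p ≠ q := H.ne_of_adj hApq
  have hda2 : 2 ≤ H.degree a := by
    have hsub : ({p, q} : Finset V) ⊆ H.neighborFinset a := by
      intro w hw
      simp only [Finset.mem_insert, Finset.mem_singleton] at hw
      rcases hw with rfl | rfl
      · exact (H.mem_neighborFinset a w).2 hap
      · exact (H.mem_neighborFinset a w).2 haq
    have hc : ({p, q} : Finset V).card = 2 := by
      rw [Finset.card_insert_of_notMem (by simp [hpq]), Finset.card_singleton]
    have := Finset.card_le_card hsub
    rw [hc] at this
    exact this
  have hdp5 : H.degree p ≤ 5 := by have := hore a p hap; omega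
  have hdq5 : H.degree q ≤ 5 := by have := hore a q haq; omega
  have hdpq : H.degree p + H.degree q ≤ 7 := hore p q hApq
  have key : ∀ d1 d2 : ℕ, d1 ≤ 5 → d1 + d2 ≤ 7 →
      (d2 - 1) + ((d1 - 2) + (d1 - 2) * (6 - d1)) ≤ 10 := by
    intro d1 d2 h1 h2
    interval_cases d1 <;> omega
  have hCp : (confH H (DelV H a) s(a, p)).card ≤ 10 :=
    (conf_cover_mid2 H a p q hap haq hApq hcov (fun y h => hore p y h)).trans
      (key _ _ hdp5 hdpq)
  have hCq : (confH H (DelV H a) s(a, q)).card ≤ 10 :=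
    (conf_cover_mid2 H a q p haq hap hApq.symm
      (fun w hw => (hcov w hw).symm) (fun y h => hore q y h)).trans
      (key _ _ hdq5 (by omega))
  obtain ⟨cp, hcp⟩ := exists_color ((confH H (DelV H a) s(a, p)).image F)
    ((Finset.card_image_le).trans (by omega))
  obtain ⟨cq, hcq⟩ := exists_color (insert cp ((confH H (DelV H a) s(a, q)).image F))
    ((Finset.card_insert_le _ _).trans (by
      have := Finset.card_image_le (s := confH H (DelV H a) s(a, q)) (f := F); omega))
  refine extend2 H a p q hap haq hpq hcov F hF cp cq ?_ ?_ ?_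
  · exact fun h => hcq (h ▸ Finset.mem_insert_self _ _)
  · intro e he hs hEq
    exact hcp (Finset.mem_image.2 ⟨e, mem_confH.2 ⟨he, hs⟩, hEq⟩)
  · intro e he hs hEq
    exact hcq (Finset.mem_insert_of_mem (Finset.mem_image.2 ⟨e, mem_confH.2 ⟨he, hs⟩, hEq⟩))

lemma case_deg3 (a x p q : V)
    (hax : H.Adj a x) (hap : H.Adj a p) (haq : H.Adj a q) (hApq : H.Adj p q)
    (hxp : x ≠ p) (hxq : x ≠ q)
    (hore : ∀ u w, H.Adj u w → H.degree u + H.degree w ≤ 7)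
    (hcov : ∀ w, H.Adj a w → w = x ∨ w = p ∨ w = q)
    (hdeg : H.degree q ≤ H.degree p)
    (hHS : HasStrongColoring (DelV H a) 13) : HasStrongColoring H 13 := by
  classical
  obtain ⟨F, hF⟩ := exists_validOn_of_hasStrong _ hHS
  have hpq : p ≠ q := H.ne_of_adj hApq
  have hpa : p ≠ a := (H.ne_of_adj hap).symm
  have hqa : q ≠ a := (H.ne_of_adj haq).symm
  have hda3 : 3 ≤ H.degree a := by
    have hsub : ({x, p, q} : Finset V) ⊆ H.neighborFinset a := by
      intro w hw
      simp only [Finset.mem_insert, Finset.mem_singleton] at hw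
      rcases hw with rfl | rfl | rfl
      · exact (H.mem_neighborFinset a w).2 hax
      · exact (H.mem_neighborFinset a w).2 hap
      · exact (H.mem_neighborFinset a w).2 haq
    have hc : ({x, p, q} : Finset V).card = 3 := by
      rw [Finset.card_insert_of_notMem (by simp [hxp, hxq]),
        Finset.card_insert_of_notMem (by simp [hpq]), Finset.card_singleton]
    have := Finset.card_le_card hsub
    rw [hc] at this
    exact this
  have hdx4 : H.degree x ≤ 4 := by have := hore a x hax; omega
  have hdp4 : H.degree p ≤ 4 := by have := hore a p hap; omega
  have hdq4 : H.degree q ≤ 4 := by have := hore a q haq; omega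
  have hdpq : H.degree p + H.degree q ≤ 7 := hore p q hApq
  -- the edge pq lives in the deleted graph
  have hpqG : s(p, q) ∈ (DelV H a).edgeSet := by
    rw [SimpleGraph.mem_edgeSet]; exact ⟨hApq, hpa, hqa⟩
  -- conflict set of ax, minus pq
  set T := (confH H (DelV H a) s(a, x)).erase s(p, q) with hTdef
  have hT : T.card ≤ 12 :=
    conf_cover_x H a x p q hax hap haq hApq hcov hdx4 hdpq (fun y h => hore x y h)
  have hS : (confH (DelV H a) (DelV H a) s(p, q)).card ≤ 10 := by
    have hsub : confH (DelV H a) (DelV H a) s(p, q) ⊆ confH H (DelV H a) s(p, q) := by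
      intro e he
      rw [mem_confH] at he ⊢
      exact ⟨he.1, sees_mono delV_le he.2⟩
    have h1 := Finset.card_le_card hsub
    have h2 := conf_cover_pq H a p q hap haq hApq (fun y h => hore p y h) (fun y h => hore q y h)
    have key2 : ∀ d1 d2 : ℕ, d1 ≤ 4 → d2 ≤ 4 → d1 + d2 ≤ 7 →
        ((d1 - 2) + (d1 - 2) * (6 - d1)) + ((d2 - 2) + (d2 - 2) * (6 - d2)) ≤ 10 := by
      intro d1 d2 ha hb hab
      interval_cases d1 <;> interval_cases d2 <;> omega
    have := key2 _ _ hdp4 hdq4 hdpq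
    omega
  obtain ⟨F', hF', himg⟩ := recolor (DelV H a) F hF hpqG T (Finset.notMem_erase _ _) hT hS
  have hsubx : confH H (DelV H a) s(a, x) ⊆ insert s(p, q) T := by
    intro e he
    by_cases hepq : e = s(p, q)
    · rw [hepq]; exact Finset.mem_insert_self _ _
    · exact Finset.mem_insert_of_mem (Finset.mem_erase.2 ⟨hepq, he⟩)
  obtain ⟨cx, hcx⟩ := exists_color ((insert s(p, q) T).image F') himg
  -- conflict bound for ap (the larger-degree triangle neighbor)
  have keyM : ∀ d1 d2 d3 : ℕ, d1 ≤ 4 → d2 ≤ 4 → d3 ≤ 4 → d1 + d2 ≤ 7 →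
      (d2 - 1) + (d3 - 1) + ((d1 - 2) + (d1 - 2) * (6 - d1)) ≤ 11 := by
    intro d1 d2 d3 h1 h2 h3 h4
    interval_cases d1 <;> omega
  have hCp : (confH H (DelV H a) s(a, p)).card ≤ 11 :=
    (conf_cover_mid H a x p q hax hap haq hApq hcov (fun y h => hore p y h)).trans
      (keyM _ _ _ hdp4 hdq4 hdx4 hdpq)
  have keyL : ∀ d1 d2 d3 : ℕ, d2 ≤ 4 → d3 ≤ 4 → d1 + d2 ≤ 7 → d1 ≤ d2 →
      (d2 - 1) + (d3 - 1) + ((d1 - 2) + (d1 - 2) * (6 - d1)) ≤ 10 := by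
    intro d1 d2 d3 h2 h3 h4 h5
    have h6 : d1 ≤ 4 := le_trans h5 h2
    interval_cases d1 <;> omega
  have hcov' : ∀ w, H.Adj a w → w = x ∨ w = q ∨ w = p := by
    intro w hw
    rcases hcov w hw with h | h | h
    · exact Or.inl h
    · exact Or.inr (Or.inr h)
    · exact Or.inr (Or.inl h)
  have hCq : (confH H (DelV H a) s(a, q)).card ≤ 10 :=
    (conf_cover_mid H a x q p hax haq hap hApq.symm hcov' (fun y h => hore q y h)).trans
      (keyL _ _ _ hdp4 hdx4 (by omega) hdeg)
  obtain ⟨cp, hcp⟩ := exists_color (insert cx ((confH H (DelV H a) s(a, p)).image F'))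
    ((Finset.card_insert_le _ _).trans (by
      have := Finset.card_image_le (s := confH H (DelV H a) s(a, p)) (f := F'); omega))
  obtain ⟨cq, hcq⟩ := exists_color
      (insert cx (insert cp ((confH H (DelV H a) s(a, q)).image F')))
    ((Finset.card_insert_le _ _).trans (by
      have h1 := Finset.card_insert_le cp ((confH H (DelV H a) s(a, q)).image F')
      have := Finset.card_image_le (s := confH H (DelV H a) s(a, q)) (f := F'); omega))
  refine extend3 H a x p q hax hap haq hxp hxq hpq hcov F' hF' cx cp cq ?_ ?_ ?_ ?_ ?_ ?_
  · exact fun h => hcp (h ▸ Finset.mem_insert_self _ _)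
  · exact fun h => hcq (h ▸ Finset.mem_insert_self _ _)
  · exact fun h => hcq (h ▸ Finset.mem_insert_of_mem (Finset.mem_insert_self _ _))
  · intro e he hs hEq
    exact hcx (Finset.mem_image.2 ⟨e, hsubx (mem_confH.2 ⟨he, hs⟩), hEq⟩)
  · intro e he hs hEq
    exact hcp (Finset.mem_insert_of_mem
      (Finset.mem_image.2 ⟨e, mem_confH.2 ⟨he, hs⟩, hEq⟩))
  · intro e he hs hEq
    exact hcq (Finset.mem_insert_of_mem (Finset.mem_insert_of_mem
      (Finset.mem_image.2 ⟨e, mem_confH.2 ⟨he, hs⟩, hEq⟩)))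

end Cases
end StrongAux

namespace StrongAux

lemma tri_colorable [Fintype V] [DecidableEq V] (H : SimpleGraph V) [DecidableRel H.Adj]
    (a p q : V) (hap : H.Adj a p) (haq : H.Adj a q) (hApq : H.Adj p q)
    (hore : ∀ u w, H.Adj u w → H.degree u + H.degree w ≤ 7)
    (hda : H.degree a ≤ 3)
    (hHS : HasStrongColoring (DelV H a) 13) : HasStrongColoring H 13 := by
  classical
  have hpq : p ≠ q := H.ne_of_adj hApq
  have hsub : ({p, q} : Finset V) ⊆ H.neighborFinset a := by
    intro w hw
    simp only [Finset.mem_insert, Finset.mem_singleton] at hw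
    rcases hw with rfl | rfl
    · exact (H.mem_neighborFinset a w).2 hap
    · exact (H.mem_neighborFinset a w).2 haq
  have hc2 : ({p, q} : Finset V).card = 2 := by
    rw [Finset.card_insert_of_notMem (by simp [hpq]), Finset.card_singleton]
  have hda2 : 2 ≤ H.degree a := by
    have := Finset.card_le_card hsub
    rw [hc2] at this
    exact this
  rcases Nat.eq_or_lt_of_le hda2 with h2 | h3
  · -- degree 2
    have heq : ({p, q} : Finset V) = H.neighborFinset a :=
      Finset.eq_of_subset_of_card_le hsub (by rw [hc2]; exact le_of_eq h2.symm)
    have hcov : ∀ w, H.Adj a w → w = p ∨ w = q := by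
      intro w hw
      have : w ∈ ({p, q} : Finset V) := by
        rw [heq]; exact (H.mem_neighborFinset a w).2 hw
      simpa using this
    exact case_deg2 H a p q hap haq hApq hore hcov hHS
  · -- degree 3
    have hda3 : H.degree a = 3 := by omega
    have hxe : (H.neighborFinset a \ {p, q}).Nonempty := by
      rw [← Finset.card_pos, Finset.card_sdiff_of_subset hsub, hc2]
      have : (H.neighborFinset a).card = 3 := hda3
      omega
    obtain ⟨x, hx⟩ := hxe
    rw [Finset.mem_sdiff] at hx
    obtain ⟨hxN, hxpq⟩ := hx
    simp only [Finset.mem_insert, Finset.mem_singleton, not_or] at hxpq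
    obtain ⟨hxp, hxq⟩ := hxpq
    have hax : H.Adj a x := (H.mem_neighborFinset a x).1 hxN
    have hsub3 : ({x, p, q} : Finset V) ⊆ H.neighborFinset a := by
      intro w hw
      simp only [Finset.mem_insert, Finset.mem_singleton] at hw
      rcases hw with rfl | rfl | rfl
      · exact hxN
      · exact (H.mem_neighborFinset a w).2 hap
      · exact (H.mem_neighborFinset a w).2 haq
    have hc3 : ({x, p, q} : Finset V).card = 3 := by
      rw [Finset.card_insert_of_notMem (by simp [hxp, hxq]),
        Finset.card_insert_of_notMem (by simp [hpq]), Finset.card_singleton]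
    have heq3 : ({x, p, q} : Finset V) = H.neighborFinset a :=
      Finset.eq_of_subset_of_card_le hsub3 (by rw [hc3]; exact le_of_eq hda3)
    have hcov : ∀ w, H.Adj a w → w = x ∨ w = p ∨ w = q := by
      intro w hw
      have : w ∈ ({x, p, q} : Finset V) := by
        rw [heq3]; exact (H.mem_neighborFinset a w).2 hw
      simpa using this
    rcases le_total (H.degree q) (H.degree p) with hd | hd
    · exact case_deg3 H a x p q hax hap haq hApq hxp hxq hore hcov hd hHS
    · have hcov' : ∀ w, H.Adj a w → w = x ∨ w = q ∨ w = p := by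
        intro w hw
        rcases hcov w hw with h | h | h
        · exact Or.inl h
        · exact Or.inr (Or.inr h)
        · exact Or.inr (Or.inl h)
      exact case_deg3 H a x q p hax haq hap hApq.symm hxq hxp hore hcov' hd hHS

end StrongAux

open StrongAux in
/-- A minimal counterexample with θ ≤ 7, χ'ₛ > 13 contains no triangle. -/
theorem stmt6 [Fintype V] (H : SimpleGraph V) [DecidableRel H.Adj]
    (hore : ∀ u w, H.Adj u w → H.degree u + H.degree w ≤ 7)
    (hnc : ¬ HasStrongColoring H 13)
    (hmin : ∀ v, HasStrongColoring (DelV H v) 13) :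
    ¬ ∃ a b c : V, H.Adj a b ∧ H.Adj b c ∧ H.Adj a c := by
  classical
  rintro ⟨A, B, C, hAB, hBC, hAC⟩
  have hsum := hore A B hAB
  by_cases hA : H.degree A ≤ 3
  · exact hnc (tri_colorable H A B C hAB hAC hBC hore hA (hmin A))
  · have hB : H.degree B ≤ 3 := by omega
    exact hnc (tri_colorable H B A C hAB.symm hBC hAC hore hB (hmin B))
end

section
/- Let H be a vertex-minimal finite simple graph with θ(H) ≤ 8 and χ'_s(H) > 20. Then H has no vertex of degree 1, 2, 6, or 7. -/
set_option maxHeartbeats 1000000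

open SimpleGraph

variable {V : Type*}

lemma mem_delV_edgeSet (G : SimpleGraph V) (v : V) (e : Sym2 V) :
    e ∈ (DelV G v).edgeSet ↔ e ∈ G.edgeSet ∧ v ∉ e := by
  induction e using Sym2.ind with
  | _ a b =>
    simp only [mem_edgeSet, Sym2.mem_iff, DelV]
    constructor
    · rintro ⟨h, ha, hb⟩
      exact ⟨h, by rintro (rfl | rfl) <;> simp_all⟩
    · rintro ⟨h, hv⟩
      push_neg at hv
      exact ⟨h, Ne.symm hv.1, Ne.symm hv.2⟩

lemma mem_incFin [Fintype V] [DecidableEq V] (H : SimpleGraph V) [DecidableRel H.Adj]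
    {e : Sym2 V} {x : V} (h : e ∈ H.edgeSet) (hx : x ∈ e) : e ∈ H.incidenceFinset x := by
  rw [mem_incidenceFinset]; exact ⟨h, hx⟩

open Classical in
/-- The set of edges of `H` that see `e`. -/
noncomputable def conflicts [Fintype V] (H : SimpleGraph V) [DecidableRel H.Adj]
    (e : Sym2 V) : Finset (Sym2 V) :=
  H.edgeFinset.filter (fun e' => EdgeSees H e e')

open Classical in
lemma mem_conflicts [Fintype V] (H : SimpleGraph V) [DecidableRel H.Adj]
    (e e' : Sym2 V) : e' ∈ conflicts H e ↔ e' ∈ H.edgeFinset ∧ EdgeSees H e e' := by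
  simp [conflicts]

open Classical in
/-- Counting bound: an edge `s(v,u)` sees at most
`(dᵤ−1)(8−dᵤ) + (dᵥ−1)(8−dᵥ)` edges. -/
lemma conflicts_card_le [Fintype V] (H : SimpleGraph V) [DecidableRel H.Adj]
    (hore : ∀ u w, H.Adj u w → H.degree u + H.degree w ≤ 8)
    (v u : V) (huv : H.Adj v u) :
    (conflicts H s(v,u)).card ≤
      (H.degree u - 1) + (H.degree v - 1)
        + (H.degree u - 1) * (7 - H.degree u)
        + (H.degree v - 1) * (7 - H.degree v) := by
  set A : Finset (Sym2 V) :=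
    ((H.incidenceFinset u).erase s(v,u)) ∪ ((H.incidenceFinset v).erase s(v,u)) with hA
  set B : Finset (Sym2 V) :=
    ((H.neighborFinset u).erase v).biUnion (fun w => (H.incidenceFinset w).erase s(u,w)) with hB
  set C : Finset (Sym2 V) :=
    ((H.neighborFinset v).erase u).biUnion (fun w => (H.incidenceFinset w).erase s(v,w)) with hC
  have hsub : conflicts H s(v,u) ⊆ A ∪ B ∪ C := by
    intro e' he'
    rw [mem_conflicts] at he'
    obtain ⟨hE, hne, a, ha, b, hb, hab⟩ := he'
    have hE' : e' ∈ H.edgeSet := by rwa [mem_edgeFinset] at hE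
    have memA_of_u : u ∈ e' → e' ∈ A ∪ B ∪ C := by
      intro hu
      refine Finset.mem_union_left _ (Finset.mem_union_left _ ?_)
      rw [hA]
      exact Finset.mem_union_left _ (Finset.mem_erase.2 ⟨hne.symm, mem_incFin H hE' hu⟩)
    have memA_of_v : v ∈ e' → e' ∈ A ∪ B ∪ C := by
      intro hv
      refine Finset.mem_union_left _ (Finset.mem_union_left _ ?_)
      rw [hA]
      exact Finset.mem_union_right _ (Finset.mem_erase.2 ⟨hne.symm, mem_incFin H hE' hv⟩)
    rcases hab with rfl | hadj
    · rcases Sym2.mem_iff.1 ha with h' | h'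
      · exact memA_of_v (h' ▸ hb)
      · exact memA_of_u (h' ▸ hb)
    · rcases Sym2.mem_iff.1 ha with h' | h'
      all_goals rw [h'] at hadj
      · -- Adj v b
        by_cases hbu : b = u
        · exact memA_of_u (hbu ▸ hb)
        · by_cases heq : e' = s(v, b)
          · exact memA_of_v (heq ▸ Sym2.mem_mk_left v b)
          · refine Finset.mem_union_right _ ?_
            rw [hC]
            refine Finset.mem_biUnion.2 ⟨b, ?_, ?_⟩
            · exact Finset.mem_erase.2 ⟨hbu, (mem_neighborFinset _ _ _).2 hadj⟩
            · exact Finset.mem_erase.2 ⟨heq, mem_incFin H hE' hb⟩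
      · -- Adj u b
        by_cases hbv : b = v
        · exact memA_of_v (hbv ▸ hb)
        · by_cases heq : e' = s(u, b)
          · exact memA_of_u (heq ▸ Sym2.mem_mk_left u b)
          · refine Finset.mem_union_left _ (Finset.mem_union_right _ ?_)
            rw [hB]
            refine Finset.mem_biUnion.2 ⟨b, ?_, ?_⟩
            · exact Finset.mem_erase.2 ⟨hbv, (mem_neighborFinset _ _ _).2 hadj⟩
            · exact Finset.mem_erase.2 ⟨heq, mem_incFin H hE' hb⟩
  have cardA : A.card ≤ (H.degree u - 1) + (H.degree v - 1) := by
    refine le_trans (Finset.card_union_le _ _) (Nat.add_le_add ?_ ?_)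
    · rw [Finset.card_erase_of_mem (mem_incFin H huv (Sym2.mem_mk_right v u)),
        card_incidenceFinset_eq_degree]
    · rw [Finset.card_erase_of_mem (mem_incFin H huv (Sym2.mem_mk_left v u)),
        card_incidenceFinset_eq_degree]
  have cardB : B.card ≤ (H.degree u - 1) * (7 - H.degree u) := by
    refine le_trans (Finset.card_biUnion_le) ?_
    have hbd : ∀ w ∈ (H.neighborFinset u).erase v,
        ((H.incidenceFinset w).erase s(u,w)).card ≤ 7 - H.degree u := by
      intro w hw
      have hadj : H.Adj u w := (mem_neighborFinset _ _ _).1 (Finset.mem_of_mem_erase hw)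
      have hsum := hore u w hadj
      have hcd : ((H.incidenceFinset w).erase s(u,w)).card = H.degree w - 1 := by
        rw [Finset.card_erase_of_mem (mem_incFin H hadj (Sym2.mem_mk_right u w)),
          card_incidenceFinset_eq_degree]
      omega
    calc ∑ w ∈ (H.neighborFinset u).erase v, ((H.incidenceFinset w).erase s(u,w)).card
        ≤ ((H.neighborFinset u).erase v).card * (7 - H.degree u) := by
          simpa using Finset.sum_le_card_nsmul _ _ _ hbd
      _ ≤ (H.degree u - 1) * (7 - H.degree u) := by
          have hcd : ((H.neighborFinset u).erase v).card = H.degree u - 1 := by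
            rw [Finset.card_erase_of_mem ((mem_neighborFinset _ _ _).2 huv.symm),
              card_neighborFinset_eq_degree]
          rw [hcd]
  have cardC : C.card ≤ (H.degree v - 1) * (7 - H.degree v) := by
    refine le_trans (Finset.card_biUnion_le) ?_
    have hbd : ∀ w ∈ (H.neighborFinset v).erase u,
        ((H.incidenceFinset w).erase s(v,w)).card ≤ 7 - H.degree v := by
      intro w hw
      have hadj : H.Adj v w := (mem_neighborFinset _ _ _).1 (Finset.mem_of_mem_erase hw)
      have hsum := hore v w hadj
      have hcd : ((H.incidenceFinset w).erase s(v,w)).card = H.degree w - 1 := by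
        rw [Finset.card_erase_of_mem (mem_incFin H hadj (Sym2.mem_mk_right v w)),
          card_incidenceFinset_eq_degree]
      omega
    calc ∑ w ∈ (H.neighborFinset v).erase u, ((H.incidenceFinset w).erase s(v,w)).card
        ≤ ((H.neighborFinset v).erase u).card * (7 - H.degree v) := by
          simpa using Finset.sum_le_card_nsmul _ _ _ hbd
      _ ≤ (H.degree v - 1) * (7 - H.degree v) := by
          have hcd : ((H.neighborFinset v).erase u).card = H.degree v - 1 := by
            rw [Finset.card_erase_of_mem ((mem_neighborFinset _ _ _).2 huv),
              card_neighborFinset_eq_degree]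
          rw [hcd]
  have h1 := Finset.card_le_card hsub
  have h2 := Finset.card_union_le (A ∪ B) C
  have h3 := Finset.card_union_le A B
  omega

open Classical in
/-- Greedy extension over a list of new edges. -/
lemma greedy [Fintype V] (H : SimpleGraph V) [DecidableRel H.Adj] (v : V)
    (hbd : ∀ e ∈ H.edgeFinset, v ∈ e → (conflicts H e).card ≤ 19)
    (g₀ : Sym2 V → Fin 20)
    (h₀ : ∀ e ∈ H.edgeFinset.filter (fun e => v ∉ e),
          ∀ e' ∈ H.edgeFinset.filter (fun e => v ∉ e),
          EdgeSees H e e' → g₀ e ≠ g₀ e') :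
    ∀ L : List (Sym2 V), L.Nodup → (∀ e ∈ L, e ∈ H.edgeFinset ∧ v ∈ e) →
      ∃ g : Sym2 V → Fin 20,
        ∀ e ∈ H.edgeFinset.filter (fun e => v ∉ e) ∪ L.toFinset,
        ∀ e' ∈ H.edgeFinset.filter (fun e => v ∉ e) ∪ L.toFinset,
          EdgeSees H e e' → g e ≠ g e' := by
  intro L
  induction L with
  | nil =>
    intro _ _
    exact ⟨g₀, by simpa using h₀⟩
  | cons e L ih =>
    intro hnd hmem
    obtain ⟨g, hg⟩ := ih hnd.of_cons (fun e' he' => hmem e' (List.mem_cons_of_mem _ he'))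
    obtain ⟨S, hS⟩ : ∃ S : Finset (Sym2 V),
        S = H.edgeFinset.filter (fun e => v ∉ e) ∪ L.toFinset := ⟨_, rfl⟩
    rw [← hS] at hg
    have heE : e ∈ H.edgeFinset := (hmem e List.mem_cons_self).1
    have hev : v ∈ e := (hmem e List.mem_cons_self).2
    have heS : e ∉ S := by
      intro h
      rw [hS, Finset.mem_union] at h
      rcases h with h | h
      · exact (Finset.mem_filter.1 h).2 hev
      · exact (List.nodup_cons.1 hnd).1 (List.mem_toFinset.1 h)
    obtain ⟨F, hF⟩ : ∃ F : Finset (Fin 20),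
        F = (S.filter (fun e' => EdgeSees H e e')).image g := ⟨_, rfl⟩
    have hFcard : F.card < 20 := by
      have h1 : S.filter (fun e' => EdgeSees H e e') ⊆ conflicts H e := by
        intro x hx
        rw [Finset.mem_filter] at hx
        rw [mem_conflicts]
        refine ⟨?_, hx.2⟩
        have hx1 := hx.1
        rw [hS, Finset.mem_union] at hx1
        rcases hx1 with h | h
        · exact (Finset.mem_filter.1 h).1
        · exact (hmem x (List.mem_cons_of_mem _ (List.mem_toFinset.1 h))).1
      rw [hF]
      calc (Finset.image g (S.filter (fun e' => EdgeSees H e e'))).card ≤ (S.filter (fun e' => EdgeSees H e e')).card := Finset.card_image_le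
        _ ≤ (conflicts H e).card := Finset.card_le_card h1
        _ ≤ 19 := hbd e heE hev
        _ < 20 := by norm_num
    obtain ⟨c, hc⟩ : ∃ c : Fin 20, c ∉ F := by
      by_contra hcon
      push_neg at hcon
      have hsub : (Finset.univ : Finset (Fin 20)) ⊆ F := fun x _ => hcon x
      have := Finset.card_le_card hsub
      simp at this
      omega
    refine ⟨fun z => if z = e then c else g z, ?_⟩
    intro x hx y hy hsees
    have hins : ∀ z, z ∈ H.edgeFinset.filter (fun e => v ∉ e) ∪ (e :: L).toFinset ↔
        z = e ∨ z ∈ S := by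
      intro z
      rw [hS]
      simp only [Finset.mem_union, Finset.mem_filter, List.toFinset_cons,
        Finset.mem_insert, List.mem_toFinset]
      tauto
    rw [hins] at hx hy
    rcases hx with hxe | hx <;> rcases hy with hye | hy
    · subst hxe
      exact (hsees.1 hye.symm).elim
    · subst hxe
      have hyne : y ≠ x := fun h => heS (h ▸ hy)
      simp only [if_pos rfl, if_neg hyne]
      intro hcc
      exact hc (hF ▸ Finset.mem_image.2 ⟨y, Finset.mem_filter.2 ⟨hy, hsees⟩, hcc.symm⟩)
    · subst hye
      have hxne : x ≠ y := fun h => heS (h ▸ hx)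
      simp only [if_pos rfl, if_neg hxne]
      intro hcc
      exact hc (hF ▸ Finset.mem_image.2 ⟨x, Finset.mem_filter.2
        ⟨hx, edgeSees_symm H hsees⟩, hcc⟩)
    · have hxne : x ≠ e := fun h => heS (h ▸ hx)
      have hyne : y ≠ e := fun h => heS (h ▸ hy)
      simp only [if_neg hxne, if_neg hyne]
      exact hg x hx y hy hsees

open Classical in
lemma extend_coloring [Fintype V] (H : SimpleGraph V) [DecidableRel H.Adj] (v : V)
    (hbd : ∀ e ∈ H.edgeFinset, v ∈ e → (conflicts H e).card ≤ 19)
    (h0 : HasStrongColoring (DelV H v) 20) : HasStrongColoring H 20 := by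
  obtain ⟨f₀, hf₀⟩ := h0
  set g₀ : Sym2 V → Fin 20 := fun e =>
    if h : e ∈ (DelV H v).edgeSet then f₀ ⟨e, h⟩ else ⟨0, by norm_num⟩ with hg₀
  have h₀ : ∀ e ∈ H.edgeFinset.filter (fun e => v ∉ e),
      ∀ e' ∈ H.edgeFinset.filter (fun e => v ∉ e),
      EdgeSees H e e' → g₀ e ≠ g₀ e' := by
    intro e he e' he' hsees
    rw [Finset.mem_filter, mem_edgeFinset] at he he'
    have hde : e ∈ (DelV H v).edgeSet := (mem_delV_edgeSet H v e).2 he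
    have hde' : e' ∈ (DelV H v).edgeSet := (mem_delV_edgeSet H v e').2 he'
    have hsees' : EdgeSees (DelV H v) e e' := by
      obtain ⟨hne, a, ha, b, hb, hab⟩ := hsees
      refine ⟨hne, a, ha, b, hb, ?_⟩
      rcases hab with rfl | hadj
      · exact Or.inl rfl
      · exact Or.inr ⟨hadj, fun h => he.2 (h ▸ ha), fun h => he'.2 (h ▸ hb)⟩
    have := hf₀ ⟨e, hde⟩ ⟨e', hde'⟩ hsees'
    simpa [hg₀, hde, hde'] using this
  set L : List (Sym2 V) := (H.edgeFinset.filter (fun e => v ∈ e)).toList with hL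
  obtain ⟨g, hg⟩ := greedy H v hbd g₀ h₀ L (Finset.nodup_toList _)
    (fun e he => by
      have hm := Finset.mem_toList.1 (hL ▸ he)
      rw [Finset.mem_filter] at hm
      exact hm)
  have hcover : H.edgeFinset.filter (fun e => v ∉ e) ∪ L.toFinset = H.edgeFinset := by
    rw [hL, Finset.toList_toFinset]
    ext x
    simp only [Finset.mem_union, Finset.mem_filter]
    tauto
  refine ⟨fun e => g e.val, ?_⟩
  intro e e' hsees
  have he : e.val ∈ H.edgeFinset.filter (fun e => v ∉ e) ∪ L.toFinset := by
    rw [hcover, mem_edgeFinset]; exact e.2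
  have he' : e'.val ∈ H.edgeFinset.filter (fun e => v ∉ e) ∪ L.toFinset := by
    rw [hcover, mem_edgeFinset]; exact e'.2
  exact hg e.val he e'.val he' hsees

/-- A minimal counterexample with θ ≤ 8, χ'ₛ > 20 has no vertex of degree 1, 2, 6 or 7. -/
theorem stmt7 [Fintype V] (H : SimpleGraph V) [DecidableRel H.Adj]
    (hore : ∀ u w, H.Adj u w → H.degree u + H.degree w ≤ 8)
    (hnc : ¬ HasStrongColoring H 20)
    (hmin : ∀ v, HasStrongColoring (DelV H v) 20) :
    ∀ v, H.degree v ≠ 1 ∧ H.degree v ≠ 2 ∧ H.degree v ≠ 6 ∧ H.degree v ≠ 7 := by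
  classical
  intro v
  have key : (H.degree v = 1 ∨ H.degree v = 2 ∨ H.degree v = 6 ∨ H.degree v = 7) → False := by
    intro hdv
    apply hnc
    refine extend_coloring H v ?_ (hmin v)
    intro e heE hev
    obtain ⟨u, rfl⟩ := Sym2.mem_iff_exists.mp hev
    have huv : H.Adj v u := by rwa [mem_edgeFinset, mem_edgeSet] at heE
    have hb := conflicts_card_le H hore v u huv
    have hsum := hore v u huv
    have h1u : 1 ≤ H.degree u := by
      rw [← card_neighborFinset_eq_degree]
      exact Finset.card_pos.2 ⟨v, (mem_neighborFinset _ _ _).2 huv.symm⟩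
    refine le_trans hb ?_
    set a := H.degree u with ha'
    have ha : a ≤ 7 := by omega
    interval_cases a <;> rcases hdv with h | h | h | h <;> rw [h] <;> omega
  refine ⟨?_, ?_, ?_, ?_⟩ <;> intro h <;> exact key (by tauto)
end

section
/- Let H be a vertex-minimal finite simple graph with θ(H) ≤ 8 and χ'_s(H) > 20. Then H contains no triangle having at least one vertex of degree 3. -/
open SimpleGraph

variable {V : Type*}

open Finset

/-- Bucket-cover counting lemma, version for an edge `a–u` where `u–v` is a triangle edge. -/
lemma conflict_bound1 [Fintype V] [DecidableEq V] (H : SimpleGraph V) [DecidableRel H.Adj]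
    (hore : ∀ u w, H.Adj u w → H.degree u + H.degree w ≤ 8)
    (a u v w : V) (hau : H.Adj a u) (hav : H.Adj a v) (haw : H.Adj a w)
    (huv : H.Adj u v) (hN : H.neighborFinset a = {u, v, w})
    (hu5 : H.degree u ≤ 5) (hv5 : H.degree v ≤ 5) (hw5 : H.degree w ≤ 5)
    (s : Finset (Sym2 V))
    (hs : ∀ e' ∈ s, e' ∈ H.edgeSet ∧ a ∉ e' ∧ EdgeSees H s(a,u) e') :
    s.card ≤ 17 := by
  set F1 : Finset (Sym2 V) := H.incidenceFinset u \ {s(a,u)} with hF1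
  set F2 : Finset (Sym2 V) := H.incidenceFinset v \ {s(a,v), s(u,v)} with hF2
  set F3 : Finset (Sym2 V) := H.incidenceFinset w \ {s(a,w)} with hF3
  set F4 : Finset (Sym2 V) :=
    (((H.neighborFinset u).erase a).erase v).biUnion
      (fun x => H.incidenceFinset x \ {s(u,x)}) with hF4
  have hsub : s ⊆ F1 ∪ F2 ∪ F3 ∪ F4 := by
    intro e' he'
    obtain ⟨heE, haE, hne, y, hy, z, hz, hyz⟩ := hs e' he'
    simp only [mem_union]
    by_cases hu' : u ∈ e'
    · refine Or.inl (Or.inl (Or.inl ?_))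
      rw [hF1, mem_sdiff, mem_incidenceFinset]
      refine ⟨⟨heE, hu'⟩, ?_⟩
      simp only [mem_singleton]
      intro h; rw [h] at haE; exact haE (Sym2.mem_mk_left a u)
    by_cases hv' : v ∈ e'
    · refine Or.inl (Or.inl (Or.inr ?_))
      rw [hF2, mem_sdiff, mem_incidenceFinset]
      refine ⟨⟨heE, hv'⟩, ?_⟩
      simp only [mem_insert, mem_singleton]
      rintro (h | h)
      · rw [h] at haE; exact haE (Sym2.mem_mk_left a v)
      · rw [h] at hu'; exact hu' (Sym2.mem_mk_left u v)
    by_cases hw' : w ∈ e'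
    · refine Or.inl (Or.inr ?_)
      rw [hF3, mem_sdiff, mem_incidenceFinset]
      refine ⟨⟨heE, hw'⟩, ?_⟩
      simp only [mem_singleton]
      intro h; rw [h] at haE; exact haE (Sym2.mem_mk_left a w)
    · refine Or.inr ?_
      rcases Sym2.mem_iff.1 hy with rfl | rfl
      · rcases hyz with rfl | hadj
        · exact absurd hz haE
        · exfalso
          have hzN : z ∈ H.neighborFinset y := by rwa [mem_neighborFinset]
          rw [hN] at hzN
          simp only [mem_insert, mem_singleton] at hzN
          rcases hzN with rfl | rfl | rfl
          · exact hu' hz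
          · exact hv' hz
          · exact hw' hz
      · rcases hyz with rfl | hadj
        · exact absurd hz hu'
        · rw [hF4, mem_biUnion]
          refine ⟨z, ?_, ?_⟩
          · rw [mem_erase, mem_erase, mem_neighborFinset]
            exact ⟨fun h => hv' (h ▸ hz), fun h => haE (h ▸ hz), hadj⟩
          · rw [mem_sdiff, mem_incidenceFinset]
            refine ⟨⟨heE, hz⟩, ?_⟩
            simp only [mem_singleton]
            intro h; rw [h] at hu'; exact hu' (Sym2.mem_mk_left y z)
  have hc1 : F1.card = H.degree u - 1 := by
    rw [hF1, card_sdiff_of_subset (by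
      simp only [singleton_subset_iff, mem_incidenceFinset]
      exact ⟨H.mem_edgeSet.2 hau, Sym2.mem_mk_right a u⟩),
      card_singleton, card_incidenceFinset_eq_degree]
  have hc2 : F2.card = H.degree v - 2 := by
    rw [hF2, card_sdiff_of_subset (by
      intro x hx
      simp only [mem_insert, mem_singleton] at hx
      rcases hx with rfl | rfl <;>
        rw [mem_incidenceFinset] <;>
        exact ⟨H.mem_edgeSet.2 (by assumption), Sym2.mem_mk_right _ _⟩),
      card_incidenceFinset_eq_degree]
    congr 1
    rw [card_insert_of_notMem (by
      simp only [mem_singleton]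
      rw [Sym2.congr_left]
      exact fun h => H.irrefl (h ▸ hau)), card_singleton]
  have hc3 : F3.card = H.degree w - 1 := by
    rw [hF3, card_sdiff_of_subset (by
      simp only [singleton_subset_iff, mem_incidenceFinset]
      exact ⟨H.mem_edgeSet.2 haw, Sym2.mem_mk_right a w⟩),
      card_singleton, card_incidenceFinset_eq_degree]
  have hc4 : F4.card ≤ (H.degree u - 2) * (7 - H.degree u) := by
    rw [hF4]
    refine le_trans (card_biUnion_le) ?_
    have hcard : (((H.neighborFinset u).erase a).erase v).card = H.degree u - 2 := by
      have hva : v ∈ (H.neighborFinset u).erase a := by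
        rw [mem_erase, mem_neighborFinset]; exact ⟨hav.ne', huv⟩
      have hau' : a ∈ H.neighborFinset u := by
        rw [mem_neighborFinset]; exact hau.symm
      rw [card_erase_of_mem hva, card_erase_of_mem hau']
      have : (H.neighborFinset u).card = H.degree u := rfl
      omega
    calc ∑ x ∈ ((H.neighborFinset u).erase a).erase v,
          (H.incidenceFinset x \ {s(u,x)}).card
        ≤ ∑ _x ∈ ((H.neighborFinset u).erase a).erase v, (7 - H.degree u) := by
          refine sum_le_sum ?_
          intro x hx
          have hxu : H.Adj u x := by
            rw [mem_erase, mem_erase, mem_neighborFinset] at hx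
            exact hx.2.2
          have hd : H.degree x + H.degree u ≤ 8 := hore x u hxu.symm
          calc (H.incidenceFinset x \ {s(u,x)}).card
              = H.degree x - 1 := by
                rw [card_sdiff_of_subset (by
                  simp only [singleton_subset_iff, mem_incidenceFinset]
                  exact ⟨H.mem_edgeSet.2 hxu, Sym2.mem_mk_right u x⟩),
                  card_singleton, card_incidenceFinset_eq_degree]
            _ ≤ 7 - H.degree u := by omega
      _ = (H.degree u - 2) * (7 - H.degree u) := by
          rw [sum_const, hcard, smul_eq_mul]
  have hdu2 : 2 ≤ H.degree u := by
    have hsub2 : ({a, v} : Finset V) ⊆ H.neighborFinset u := by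
      intro x hx
      simp only [mem_insert, mem_singleton] at hx
      rcases hx with rfl | rfl <;> rw [mem_neighborFinset]
      · exact hau.symm
      · exact huv
    have := card_le_card hsub2
    rwa [card_insert_of_notMem (by simp [hav.ne]), card_singleton] at this
  have huv8 : H.degree u + H.degree v ≤ 8 := hore u v huv
  have := card_le_card hsub
  have hcu := card_union_le (F1 ∪ F2 ∪ F3) F4
  have hcu2 := card_union_le (F1 ∪ F2) F3
  have hcu3 := card_union_le F1 F2
  set du := H.degree u
  interval_cases du <;> omega

/-- Bucket-cover counting lemma, version for the edge `a–u` where `v–w` is a triangle edge. -/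
lemma conflict_bound2 [Fintype V] [DecidableEq V] (H : SimpleGraph V) [DecidableRel H.Adj]
    (hore : ∀ u w, H.Adj u w → H.degree u + H.degree w ≤ 8)
    (a u v w : V) (hau : H.Adj a u) (hav : H.Adj a v) (haw : H.Adj a w)
    (hvw : H.Adj v w) (hN : H.neighborFinset a = {u, v, w})
    (hu5 : H.degree u ≤ 5) (hv5 : H.degree v ≤ 5) (hw5 : H.degree w ≤ 5)
    (s : Finset (Sym2 V))
    (hs : ∀ e' ∈ s, e' ∈ H.edgeSet ∧ a ∉ e' ∧ EdgeSees H s(a,u) e') :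
    s.card ≤ 17 := by
  set F1 : Finset (Sym2 V) := H.incidenceFinset u \ {s(a,u)} with hF1
  set F2 : Finset (Sym2 V) := H.incidenceFinset v \ {s(a,v)} with hF2
  set F3 : Finset (Sym2 V) := H.incidenceFinset w \ {s(a,w), s(v,w)} with hF3
  set F4 : Finset (Sym2 V) :=
    ((H.neighborFinset u).erase a).biUnion
      (fun x => H.incidenceFinset x \ {s(u,x)}) with hF4
  have hsub : s ⊆ F1 ∪ F2 ∪ F3 ∪ F4 := by
    intro e' he'
    obtain ⟨heE, haE, hne, y, hy, z, hz, hyz⟩ := hs e' he'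
    simp only [mem_union]
    by_cases hu' : u ∈ e'
    · refine Or.inl (Or.inl (Or.inl ?_))
      rw [hF1, mem_sdiff, mem_incidenceFinset]
      refine ⟨⟨heE, hu'⟩, ?_⟩
      simp only [mem_singleton]
      intro h; rw [h] at haE; exact haE (Sym2.mem_mk_left a u)
    by_cases hv' : v ∈ e'
    · refine Or.inl (Or.inl (Or.inr ?_))
      rw [hF2, mem_sdiff, mem_incidenceFinset]
      refine ⟨⟨heE, hv'⟩, ?_⟩
      simp only [mem_singleton]
      intro h; rw [h] at haE; exact haE (Sym2.mem_mk_left a v)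
    by_cases hw' : w ∈ e'
    · refine Or.inl (Or.inr ?_)
      rw [hF3, mem_sdiff, mem_incidenceFinset]
      refine ⟨⟨heE, hw'⟩, ?_⟩
      simp only [mem_insert, mem_singleton]
      rintro (h | h)
      · rw [h] at haE; exact haE (Sym2.mem_mk_left a w)
      · rw [h] at hv'; exact hv' (Sym2.mem_mk_left v w)
    · refine Or.inr ?_
      rcases Sym2.mem_iff.1 hy with rfl | rfl
      · rcases hyz with rfl | hadj
        · exact absurd hz haE
        · exfalso
          have hzN : z ∈ H.neighborFinset y := by rwa [mem_neighborFinset]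
          rw [hN] at hzN
          simp only [mem_insert, mem_singleton] at hzN
          rcases hzN with rfl | rfl | rfl
          · exact hu' hz
          · exact hv' hz
          · exact hw' hz
      · rcases hyz with rfl | hadj
        · exact absurd hz hu'
        · rw [hF4, mem_biUnion]
          refine ⟨z, ?_, ?_⟩
          · rw [mem_erase, mem_neighborFinset]
            exact ⟨fun h => haE (h ▸ hz), hadj⟩
          · rw [mem_sdiff, mem_incidenceFinset]
            refine ⟨⟨heE, hz⟩, ?_⟩
            simp only [mem_singleton]
            intro h; rw [h] at hu'; exact hu' (Sym2.mem_mk_left y z)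
  have hc1 : F1.card = H.degree u - 1 := by
    rw [hF1, card_sdiff_of_subset (by
      simp only [singleton_subset_iff, mem_incidenceFinset]
      exact ⟨H.mem_edgeSet.2 hau, Sym2.mem_mk_right a u⟩),
      card_singleton, card_incidenceFinset_eq_degree]
  have hc2 : F2.card = H.degree v - 1 := by
    rw [hF2, card_sdiff_of_subset (by
      simp only [singleton_subset_iff, mem_incidenceFinset]
      exact ⟨H.mem_edgeSet.2 hav, Sym2.mem_mk_right a v⟩),
      card_singleton, card_incidenceFinset_eq_degree]
  have hc3 : F3.card = H.degree w - 2 := by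
    rw [hF3, card_sdiff_of_subset (by
      intro x hx
      simp only [mem_insert, mem_singleton] at hx
      rcases hx with rfl | rfl <;>
        rw [mem_incidenceFinset] <;>
        exact ⟨H.mem_edgeSet.2 (by assumption), Sym2.mem_mk_right _ _⟩),
      card_incidenceFinset_eq_degree]
    congr 1
    rw [card_insert_of_notMem (by
      simp only [mem_singleton]
      rw [Sym2.congr_left]
      exact fun h => H.irrefl (h ▸ hav)), card_singleton]
  have hc4 : F4.card ≤ (H.degree u - 1) * (7 - H.degree u) := by
    rw [hF4]
    refine le_trans (card_biUnion_le) ?_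
    have hcard : ((H.neighborFinset u).erase a).card = H.degree u - 1 := by
      have hau' : a ∈ H.neighborFinset u := by
        rw [mem_neighborFinset]; exact hau.symm
      rw [card_erase_of_mem hau']
      rfl
    calc ∑ x ∈ (H.neighborFinset u).erase a,
          (H.incidenceFinset x \ {s(u,x)}).card
        ≤ ∑ _x ∈ (H.neighborFinset u).erase a, (7 - H.degree u) := by
          refine sum_le_sum ?_
          intro x hx
          have hxu : H.Adj u x := by
            rw [mem_erase, mem_neighborFinset] at hx
            exact hx.2
          have hd : H.degree x + H.degree u ≤ 8 := hore x u hxu.symm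
          calc (H.incidenceFinset x \ {s(u,x)}).card
              = H.degree x - 1 := by
                rw [card_sdiff_of_subset (by
                  simp only [singleton_subset_iff, mem_incidenceFinset]
                  exact ⟨H.mem_edgeSet.2 hxu, Sym2.mem_mk_right u x⟩),
                  card_singleton, card_incidenceFinset_eq_degree]
            _ ≤ 7 - H.degree u := by omega
      _ = (H.degree u - 1) * (7 - H.degree u) := by
          rw [sum_const, hcard, smul_eq_mul]
  have hdu1 : 1 ≤ H.degree u := by
    have : a ∈ H.neighborFinset u := by rw [mem_neighborFinset]; exact hau.symm
    have := card_pos.2 ⟨a, this⟩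
    have h2 : (H.neighborFinset u).card = H.degree u := rfl
    omega
  have hvw8 : H.degree v + H.degree w ≤ 8 := hore v w hvw
  have := card_le_card hsub
  have hcu := card_union_le (F1 ∪ F2 ∪ F3) F4
  have hcu2 := card_union_le (F1 ∪ F2) F3
  have hcu3 := card_union_le F1 F2
  set du := H.degree u
  interval_cases du <;> omega

/-- θ ≤ 8, χ'ₛ > 20: no triangle contains a 3-vertex. -/
theorem stmt10 [Fintype V] (H : SimpleGraph V) [DecidableRel H.Adj]
    (hore : ∀ u w, H.Adj u w → H.degree u + H.degree w ≤ 8)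
    (hnc : ¬ HasStrongColoring H 20)
    (hmin : ∀ v, HasStrongColoring (DelV H v) 20) :
    ¬ ∃ a b c : V, H.Adj a b ∧ H.Adj b c ∧ H.Adj a c ∧ H.degree a = 3 := by
  rintro ⟨a, b, c, hab, hbc, hac, hdeg⟩
  classical
  have hb5 : H.degree b ≤ 5 := by have := hore a b hab; omega
  have hc5 : H.degree c ≤ 5 := by have := hore a c hac; omega
  have hbN : b ∈ H.neighborFinset a := by rw [mem_neighborFinset]; exact hab
  have hcN : c ∈ H.neighborFinset a := by rw [mem_neighborFinset]; exact hac
  have hcardN : (H.neighborFinset a).card = 3 := hdeg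
  -- extract the third neighbor d
  have hcEb : c ∈ (H.neighborFinset a).erase b := mem_erase.2 ⟨hbc.ne', hcN⟩
  have h2 : (((H.neighborFinset a).erase b).erase c).card = 1 := by
    rw [card_erase_of_mem hcEb, card_erase_of_mem hbN, hcardN]
  obtain ⟨d, hd⟩ := card_eq_one.1 h2
  have hdmem : d ∈ ((H.neighborFinset a).erase b).erase c := hd ▸ mem_singleton_self d
  have hdc : d ≠ c := (mem_erase.1 hdmem).1
  have hdb : d ≠ b := (mem_erase.1 (mem_erase.1 hdmem).2).1
  have hdN : d ∈ H.neighborFinset a := (mem_erase.1 (mem_erase.1 hdmem).2).2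
  have had : H.Adj a d := by rw [mem_neighborFinset] at hdN; exact hdN
  have hd5 : H.degree d ≤ 5 := by have := hore a d had; omega
  have hNa : H.neighborFinset a = {b, c, d} := by
    calc H.neighborFinset a = insert b ((H.neighborFinset a).erase b) :=
          (insert_erase hbN).symm
      _ = insert b (insert c (((H.neighborFinset a).erase b).erase c)) := by
          rw [insert_erase hcEb]
      _ = {b, c, d} := by rw [hd]
  obtain ⟨f, hf⟩ := hmin a
  -- edges of H avoiding a are edges of H − a
  have hDel : ∀ e : Sym2 V, e ∈ H.edgeSet → a ∉ e → e ∈ (DelV H a).edgeSet := by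
    intro e
    induction e using Sym2.ind with
    | _ x y =>
      intro he hae
      rw [SimpleGraph.mem_edgeSet] at he ⊢
      exact ⟨he, fun h => hae (h ▸ Sym2.mem_mk_left x y),
        fun h => hae (h ▸ Sym2.mem_mk_right x y)⟩
  set g0 : Sym2 V → Fin 20 :=
    fun e => if h : e ∈ (DelV H a).edgeSet then f ⟨e, h⟩ else 0 with hg0
  -- conflict finsets
  set Cb : Finset (Sym2 V) :=
    H.edgeFinset.filter (fun e' => a ∉ e' ∧ EdgeSees H s(a,b) e') with hCbdef
  set Cc : Finset (Sym2 V) :=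
    H.edgeFinset.filter (fun e' => a ∉ e' ∧ EdgeSees H s(a,c) e') with hCcdef
  set Cd : Finset (Sym2 V) :=
    H.edgeFinset.filter (fun e' => a ∉ e' ∧ EdgeSees H s(a,d) e') with hCddef
  have hCbP : ∀ e' ∈ Cb, e' ∈ H.edgeSet ∧ a ∉ e' ∧ EdgeSees H s(a,b) e' := by
    intro e' h; rw [hCbdef, mem_filter, mem_edgeFinset] at h; tauto
  have hCcP : ∀ e' ∈ Cc, e' ∈ H.edgeSet ∧ a ∉ e' ∧ EdgeSees H s(a,c) e' := by
    intro e' h; rw [hCcdef, mem_filter, mem_edgeFinset] at h; tauto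
  have hCdP : ∀ e' ∈ Cd, e' ∈ H.edgeSet ∧ a ∉ e' ∧ EdgeSees H s(a,d) e' := by
    intro e' h; rw [hCddef, mem_filter, mem_edgeFinset] at h; tauto
  have hNa2 : H.neighborFinset a = {c, b, d} := by
    rw [hNa]; ext x; simp only [mem_insert, mem_singleton]; tauto
  have hNa3 : H.neighborFinset a = {d, b, c} := by
    rw [hNa]; ext x; simp only [mem_insert, mem_singleton]; tauto
  have hCb : Cb.card ≤ 17 :=
    conflict_bound1 H hore a b c d hab hac had hbc hNa hb5 hc5 hd5 Cb hCbP
  have hCc : Cc.card ≤ 17 :=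
    conflict_bound1 H hore a c b d hac hab had hbc.symm hNa2 hc5 hb5 hd5 Cc hCcP
  have hCd : Cd.card ≤ 17 :=
    conflict_bound2 H hore a d b c had hab hac hbc hNa3 hd5 hb5 hc5 Cd hCdP
  -- picking fresh colors
  have hpick : ∀ F : Finset (Fin 20), F.card ≤ 19 → ∃ x, x ∉ F := by
    intro F hF
    by_contra h
    push_neg at h
    have hu : F = Finset.univ := eq_univ_iff_forall.2 h
    rw [hu, card_univ, Fintype.card_fin] at hF
    omega
  obtain ⟨cb, hcb⟩ := hpick (Cb.image g0)
    (le_trans (card_image_le) (by omega))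
  obtain ⟨cc, hcc⟩ := hpick (Cc.image g0 ∪ {cb})
    (le_trans (card_union_le _ _) (by
      have := card_image_le (s := Cc) (f := g0); simp only [card_singleton]; omega))
  obtain ⟨cd, hcd⟩ := hpick (Cd.image g0 ∪ {cb, cc})
    (le_trans (card_union_le _ _) (by
      have h1 := card_image_le (s := Cd) (f := g0)
      have h2 : ({cb, cc} : Finset (Fin 20)).card ≤ 2 :=
        le_trans (card_insert_le _ _) (by simp)
      omega))
  have hccI : cc ∉ Cc.image g0 := fun h => hcc (mem_union_left _ h)
  have hcdI : cd ∉ Cd.image g0 := fun h => hcd (mem_union_left _ h)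
  have hccb : cc ≠ cb := fun h => hcc (mem_union_right _ (by simp [h]))
  have hcdb : cd ≠ cb := fun h => hcd (mem_union_right _ (by simp [h]))
  have hcdc : cd ≠ cc := fun h => hcd (mem_union_right _ (by simp [h]))
  -- classification of edges at a
  have hclass : ∀ e ∈ H.edgeSet, a ∈ e → e = s(a,b) ∨ e = s(a,c) ∨ e = s(a,d) := by
    intro e
    induction e using Sym2.ind with
    | _ x y =>
      intro he hae
      rw [SimpleGraph.mem_edgeSet] at he
      rcases Sym2.mem_iff.1 hae with rfl | rfl
      · have : y ∈ H.neighborFinset a := by rw [mem_neighborFinset]; exact he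
        rw [hNa] at this
        simp only [mem_insert, mem_singleton] at this
        rcases this with rfl | rfl | rfl
        · exact Or.inl rfl
        · exact Or.inr (Or.inl rfl)
        · exact Or.inr (Or.inr rfl)
      · have : x ∈ H.neighborFinset a := by rw [mem_neighborFinset]; exact he.symm
        rw [hNa] at this
        simp only [mem_insert, mem_singleton] at this
        rcases this with rfl | rfl | rfl
        · exact Or.inl (Sym2.eq_swap)
        · exact Or.inr (Or.inl (Sym2.eq_swap))
        · exact Or.inr (Or.inr (Sym2.eq_swap))
  -- the extended coloring
  set g : H.edgeSet → Fin 20 := fun e =>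
    if e.val = s(a,b) then cb
    else if e.val = s(a,c) then cc
    else if e.val = s(a,d) then cd
    else g0 e.val with hgdef
  -- distinctness of the three new edges
  have sbc : s(a,b) ≠ s(a,c) := fun h => hbc.ne (Sym2.congr_right.1 h)
  have sbd : s(a,b) ≠ s(a,d) := fun h => hdb (Sym2.congr_right.1 h).symm
  have scd : s(a,c) ≠ s(a,d) := fun h => hdc (Sym2.congr_right.1 h).symm
  -- evaluation lemmas
  have evB : ∀ e : H.edgeSet, e.val = s(a,b) → g e = cb := by
    intro e h; simp only [hgdef]; rw [if_pos h]
  have evC : ∀ e : H.edgeSet, e.val = s(a,c) → g e = cc := by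
    intro e h; simp only [hgdef]
    rw [if_neg (by rw [h]; exact sbc.symm), if_pos h]
  have evD : ∀ e : H.edgeSet, e.val = s(a,d) → g e = cd := by
    intro e h; simp only [hgdef]
    rw [if_neg (by rw [h]; exact sbd.symm), if_neg (by rw [h]; exact scd.symm), if_pos h]
  have evO : ∀ e : H.edgeSet, a ∉ e.val → g e = g0 e.val := by
    intro e h; simp only [hgdef]
    rw [if_neg (fun hh => h (by rw [hh]; exact Sym2.mem_mk_left a b)),
      if_neg (fun hh => h (by rw [hh]; exact Sym2.mem_mk_left a c)),
      if_neg (fun hh => h (by rw [hh]; exact Sym2.mem_mk_left a d))]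
  -- conflict exclusion facts
  have keyB : ∀ e' : H.edgeSet, a ∉ e'.val → EdgeSees H s(a,b) e'.val →
      g0 e'.val ≠ cb := by
    intro e' h1 h2 heq
    exact hcb (heq ▸ mem_image_of_mem g0
      (mem_filter.2 ⟨mem_edgeFinset.2 e'.2, h1, h2⟩))
  have keyC : ∀ e' : H.edgeSet, a ∉ e'.val → EdgeSees H s(a,c) e'.val →
      g0 e'.val ≠ cc := by
    intro e' h1 h2 heq
    exact hccI (heq ▸ mem_image_of_mem g0
      (mem_filter.2 ⟨mem_edgeFinset.2 e'.2, h1, h2⟩))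
  have keyD : ∀ e' : H.edgeSet, a ∉ e'.val → EdgeSees H s(a,d) e'.val →
      g0 e'.val ≠ cd := by
    intro e' h1 h2 heq
    exact hcdI (heq ▸ mem_image_of_mem g0
      (mem_filter.2 ⟨mem_edgeFinset.2 e'.2, h1, h2⟩))
  have keyDel : ∀ e e' : H.edgeSet, a ∉ e.val → a ∉ e'.val →
      EdgeSees H e.val e'.val → g0 e.val ≠ g0 e'.val := by
    intro e e' h1 h2 hsee
    obtain ⟨hne, y, hy, z, hz, hyz⟩ := hsee
    have he : e.val ∈ (DelV H a).edgeSet := hDel _ e.2 h1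
    have he' : e'.val ∈ (DelV H a).edgeSet := hDel _ e'.2 h2
    have hsees : EdgeSees (DelV H a) e.val e'.val := by
      refine ⟨hne, y, hy, z, hz, ?_⟩
      rcases hyz with h | h
      · exact Or.inl h
      · exact Or.inr ⟨h, fun hh => h1 (hh ▸ hy), fun hh => h2 (hh ▸ hz)⟩
    have := hf ⟨e.val, he⟩ ⟨e'.val, he'⟩ hsees
    simp only [hg0]
    rw [dif_pos he, dif_pos he']
    exact this
  -- symmetry of EdgeSees
  have hsym : ∀ e e' : Sym2 V, EdgeSees H e e' → EdgeSees H e' e := by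
    rintro e e' ⟨hne, y, hy, z, hz, hyz⟩
    refine ⟨hne.symm, z, hz, y, hy, ?_⟩
    rcases hyz with h | h
    · exact Or.inl h.symm
    · exact Or.inr h.symm
  -- the strong coloring of H, contradiction
  apply hnc
  refine ⟨g, ?_⟩
  intro e e' hsee
  have hne : e.val ≠ e'.val := hsee.1
  by_cases hae : a ∈ e.val <;> by_cases hae' : a ∈ e'.val
  · -- both edges at a
    rcases hclass e.val e.2 hae with h | h | h <;>
      rcases hclass e'.val e'.2 hae' with h' | h' | h'
    · exact absurd (h.trans h'.symm) hne
    · rw [evB e h, evC e' h']; exact hccb.symm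
    · rw [evB e h, evD e' h']; exact hcdb.symm
    · rw [evC e h, evB e' h']; exact hccb
    · exact absurd (h.trans h'.symm) hne
    · rw [evC e h, evD e' h']; exact hcdc.symm
    · rw [evD e h, evB e' h']; exact hcdb
    · rw [evD e h, evC e' h']; exact hcdc
    · exact absurd (h.trans h'.symm) hne
  · -- e at a, e' not
    rcases hclass e.val e.2 hae with h | h | h
    · rw [evB e h, evO e' hae']; exact (keyB e' hae' (h ▸ hsee)).symm
    · rw [evC e h, evO e' hae']; exact (keyC e' hae' (h ▸ hsee)).symm
    · rw [evD e h, evO e' hae']; exact (keyD e' hae' (h ▸ hsee)).symm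
  · -- e' at a, e not
    have hsee' := hsym _ _ hsee
    rcases hclass e'.val e'.2 hae' with h | h | h
    · rw [evO e hae, evB e' h]; exact keyB e hae (h ▸ hsee')
    · rw [evO e hae, evC e' h]; exact keyC e hae (h ▸ hsee')
    · rw [evO e hae, evD e' h]; exact keyD e hae (h ▸ hsee')
  · -- neither at a
    rw [evO e hae, evO e' hae']
    exact keyDel e e' hae hae' hsee
end
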